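/- arXiv:2005.12909 — 3 statements merged into one kernel-verified Lean document; each statement's English description precedes it below -/
import Mathlib

section
/- Let G be an n-vertex Class 2 simple graph with maximum degree Δ having a full-deficiency pair (a,b) such that ab is a critical edge of G. Then for every vertex x ∈ (N_G(a) ∪ N_G(b)) ∖ {a,b}, we have d_G(x) = Δ. -/
/-- `c` is a proper edge coloring of `G` using colors in `{1, …, k}`:
every edge gets a color in `[1,k]`, and distinct edges sharing an endpoint
get distinct colors. -/
def IsEdgeColoring {V : Type*} (G : SimpleGraph V) (k : ℕ) (c : Sym2 V → ℕ) : Prop :=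
  (∀ e ∈ G.edgeSet, 1 ≤ c e ∧ c e ≤ k) ∧
    ∀ e ∈ G.edgeSet, ∀ f ∈ G.edgeSet, e ≠ f → (∃ v, v ∈ e ∧ v ∈ f) → c e ≠ c f

/-- The chromatic index `χ'(G)`: the least `k` admitting a proper edge `k`-coloring. -/
noncomputable def chromIndex {V : Type*} (G : SimpleGraph V) : ℕ :=
  sInf {k | ∃ c, IsEdgeColoring G k c}

/-- An edge `e` of `G` is critical if `χ'(G-e) < χ'(G)`. -/
def IsCriticalEdge {V : Type*} (G : SimpleGraph V) (e : Sym2 V) : Prop :=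
  e ∈ G.edgeSet ∧ chromIndex (G.deleteEdges {e}) < chromIndex G

/-- The set of colors of `[1,k]` missing at `v` under the coloring `c` of `G`. -/
def missingColors {V : Type*} (G : SimpleGraph V) (k : ℕ) (c : Sym2 V → ℕ) (v : V) : Set ℕ :=
  {α | 1 ≤ α ∧ α ≤ k ∧ ∀ e ∈ G.edgeSet, v ∈ e → c e ≠ α}

/-- `G` is `Δ`-critical: `Δ` is the maximum degree of `G`, `χ'(G) = Δ+1`, and every
proper subgraph has chromatic index less than `Δ+1`. -/
def IsDeltaCritical {V : Type*} [Fintype V] (G : SimpleGraph V) [DecidableRel G.Adj]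
    (Δ : ℕ) : Prop :=
  G.maxDegree = Δ ∧ chromIndex G = Δ + 1 ∧
    ∀ H : SimpleGraph V, H ≤ G → H ≠ G → chromIndex H < Δ + 1

/-- A Kierstead path `(v₀, v₀v₁, v₁, …, v_{p-1}v_p, v_p)` with respect to the edge
`v₀v₁` and a `k`-coloring `c` of `G - v₀v₁`, encoded by the list `P = [v₀, …, v_p]`. -/
structure IsKiersteadPath {V : Type*} (G : SimpleGraph V) (k : ℕ) (c : Sym2 V → ℕ)
    (P : List V) : Prop where
  two_le : 2 ≤ P.length
  nodup : P.Nodup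
  adj : ∀ (i : ℕ) (h : i + 1 < P.length), G.Adj (P[i]'(by omega)) (P[i+1]'h)
  color : ∀ (i : ℕ) (h : i + 1 < P.length), 1 ≤ i →
      ∃ (j : ℕ) (_ : j ≤ i),
        c (Sym2.mk (P[i]'(by omega)) (P[i+1]'h)) ∈
          missingColors (G.deleteEdges {Sym2.mk (P[0]'(by omega)) (P[1]'(by omega))}) k c
            (P[j]'(by omega))

/-- A multifan centered at `r` with respect to the edge `r s₁` and a `k`-coloring `c` of
`G - r s₁`, encoded by `r` and the list `sl = [s₁, …, s_p]`. -/
structure IsMultifan {V : Type*} (G : SimpleGraph V) (k : ℕ) (c : Sym2 V → ℕ)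
    (r : V) (sl : List V) : Prop where
  one_le : 1 ≤ sl.length
  nodup : (r :: sl).Nodup
  adj : ∀ (i : ℕ) (h : i < sl.length), G.Adj r (sl[i]'h)
  color : ∀ (i : ℕ) (h : i < sl.length), 1 ≤ i →
      ∃ (j : ℕ) (_ : j < i),
        c (Sym2.mk r (sl[i]'h)) ∈
          missingColors (G.deleteEdges {Sym2.mk r (sl[0]'(by omega))}) k c
            (sl[j]'(by omega))

/-- The subgraph of `G` whose edges are the edges colored `α` or `β` by `c`;
its components are the `(α,β)`-chains. -/
def chainGraph {V : Type*} (G : SimpleGraph V) (c : Sym2 V → ℕ) (α β : ℕ) :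
    SimpleGraph V where
  Adj x y := G.Adj x y ∧ (c (Sym2.mk x y) = α ∨ c (Sym2.mk x y) = β)
  symm := ⟨by
    intro x y hxy
    refine ⟨hxy.1.symm, ?_⟩
    rw [Sym2.eq_swap]
    exact hxy.2⟩
  loopless := ⟨fun x hx => G.loopless.irrefl x hx.1⟩

/-- `x` and `y` are `(α,β)`-linked with respect to the coloring `c` of `G`:
they belong to the same `(α,β)`-chain. -/
def Linked {V : Type*} (G : SimpleGraph V) (c : Sym2 V → ℕ) (α β : ℕ) (x y : V) : Prop :=
  (chainGraph G c α β).Reachable x y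


namespace FDP

open SimpleGraph

variable {V : Type*}

/-- `δ` is a color not appearing at `v` in coloring `c` of `G`. -/
def Miss (G : SimpleGraph V) (c : Sym2 V → ℕ) (v : V) (δ : ℕ) : Prop :=
  ∀ e ∈ G.edgeSet, v ∈ e → c e ≠ δ

lemma coloring_mono {G : SimpleGraph V} {k k' : ℕ} {c : Sym2 V → ℕ}
    (h : IsEdgeColoring G k c) (hk : k ≤ k') : IsEdgeColoring G k' c :=
  ⟨fun e he => ⟨(h.1 e he).1, (h.1 e he).2.trans hk⟩, h.2⟩

lemma exists_edgeColoring [Fintype V] [DecidableEq V] (G : SimpleGraph V) :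
    ∃ k c, IsEdgeColoring G k c := by
  refine ⟨Fintype.card (Sym2 V), fun e => (Fintype.equivFin (Sym2 V) e : ℕ) + 1, ?_, ?_⟩
  · intro e _
    dsimp only
    have := (Fintype.equivFin (Sym2 V) e).isLt
    omega
  · intro e _ f _ hef _ hcc
    dsimp only at hcc
    exact hef ((Fintype.equivFin (Sym2 V)).injective (Fin.ext (by omega)))

lemma chromIndex_le {G : SimpleGraph V} {k : ℕ} {c : Sym2 V → ℕ} (h : IsEdgeColoring G k c) :
    chromIndex G ≤ k := Nat.sInf_le ⟨c, h⟩

lemma exists_chromIndex_coloring [Fintype V] [DecidableEq V] (G : SimpleGraph V) :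
    ∃ c, IsEdgeColoring G (chromIndex G) c := by
  obtain ⟨k, c, h⟩ := exists_edgeColoring G
  exact Nat.sInf_mem (⟨k, c, h⟩ : Set.Nonempty {k | ∃ c, IsEdgeColoring G k c})

lemma recolor_coloring [DecidableEq V] {G : SimpleGraph V} {k : ℕ} {c : Sym2 V → ℕ}
    (hc : IsEdgeColoring G k c) {u v : V} (he : Sym2.mk u v ∈ G.edgeSet)
    {δ : ℕ} (hδ1 : 1 ≤ δ) (hδ2 : δ ≤ k)
    (hu : Miss G c u δ) (hv : Miss G c v δ) :
    IsEdgeColoring G k (fun e => if e = Sym2.mk u v then δ else c e) := by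
  constructor
  · intro e he'
    dsimp only
    split_ifs with h
    · exact ⟨hδ1, hδ2⟩
    · exact hc.1 e he'
  · rintro e he' f hf' hef ⟨w, hwe, hwf⟩
    dsimp only
    split_ifs with h1 h2 h2
    · exact absurd (h1.trans h2.symm) hef
    · subst h1
      intro hcontra
      rcases Sym2.mem_iff.mp hwe with rfl | rfl
      · exact hu f hf' hwf hcontra.symm
      · exact hv f hf' hwf hcontra.symm
    · subst h2
      intro hcontra
      rcases Sym2.mem_iff.mp hwf with rfl | rfl
      · exact hu e he' hwe hcontra
      · exact hv e he' hwe hcontra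
    · exact hc.2 e he' f hf' hef ⟨w, hwe, hwf⟩

lemma extend_coloring [DecidableEq V] {G : SimpleGraph V} {k : ℕ} {c : Sym2 V → ℕ}
    {u v : V} (he : Sym2.mk u v ∈ G.edgeSet)
    (hc : IsEdgeColoring (G.deleteEdges {Sym2.mk u v}) k c)
    {δ : ℕ} (hδ1 : 1 ≤ δ) (hδ2 : δ ≤ k)
    (hu : Miss (G.deleteEdges {Sym2.mk u v}) c u δ)
    (hv : Miss (G.deleteEdges {Sym2.mk u v}) c v δ) :
    IsEdgeColoring G k (fun e => if e = Sym2.mk u v then δ else c e) := by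
  have hmem : ∀ e ∈ G.edgeSet, e ≠ Sym2.mk u v →
      e ∈ (G.deleteEdges {Sym2.mk u v}).edgeSet := by
    intro e he' hne
    rw [SimpleGraph.edgeSet_deleteEdges]
    exact ⟨he', hne⟩
  constructor
  · intro e he'
    dsimp only
    split_ifs with h
    · exact ⟨hδ1, hδ2⟩
    · exact hc.1 e (hmem e he' h)
  · rintro e he' f hf' hef ⟨w, hwe, hwf⟩
    dsimp only
    split_ifs with h1 h2 h2
    · exact absurd (h1.trans h2.symm) hef
    · subst h1
      intro hcontra
      rcases Sym2.mem_iff.mp hwe with rfl | rfl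
      · exact hu f (hmem f hf' h2) hwf hcontra.symm
      · exact hv f (hmem f hf' h2) hwf hcontra.symm
    · subst h2
      intro hcontra
      rcases Sym2.mem_iff.mp hwf with rfl | rfl
      · exact hu e (hmem e he' h1) hwe hcontra
      · exact hv e (hmem e he' h1) hwe hcontra
    · exact hc.2 e (hmem e he' h1) f (hmem f hf' h2) hef ⟨w, hwe, hwf⟩

open Classical in
noncomputable def swapC (G : SimpleGraph V) (c : Sym2 V → ℕ) (α β : ℕ) (x : V)
    (e : Sym2 V) : ℕ :=
  if (c e = α ∨ c e = β) ∧ ∃ v, v ∈ e ∧ (chainGraph G c α β).Reachable x v then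
    (if c e = α then β else α) else c e

lemma chain_reach_transfer {G : SimpleGraph V} {c : Sym2 V → ℕ} {α β : ℕ} {x : V}
    {e : Sym2 V} (he : e ∈ G.edgeSet) (hcol : c e = α ∨ c e = β) {w : V} (hw : w ∈ e)
    (h : ∃ v, v ∈ e ∧ (chainGraph G c α β).Reachable x v) :
    (chainGraph G c α β).Reachable x w := by
  obtain ⟨v, hv, hr⟩ := h
  by_cases hvw : v = w
  · exact hvw ▸ hr
  · have hekey : e = Sym2.mk v w := (Sym2.mem_and_mem_iff hvw).mp ⟨hv, hw⟩
    have hadj : (chainGraph G c α β).Adj v w := by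
      constructor
      · rw [← SimpleGraph.mem_edgeSet, ← hekey]; exact he
      · rw [← hekey]; exact hcol
    exact hr.trans hadj.reachable

lemma swapC_spec (G : SimpleGraph V) (c : Sym2 V → ℕ) (α β : ℕ) (x : V) (e : Sym2 V) :
    swapC G c α β x e = c e ∨ (swapC G c α β x e = β ∧ c e = α) ∨
      (swapC G c α β x e = α ∧ c e = β) := by
  unfold swapC
  split_ifs with h1 h2
  · exact Or.inr (Or.inl ⟨rfl, h2⟩)
  · rcases h1.1 with h | h
    · exact absurd h h2
    · exact Or.inr (Or.inr ⟨rfl, h⟩)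
  · exact Or.inl rfl

lemma swapC_eq_flip {G : SimpleGraph V} {c : Sym2 V → ℕ} {α β : ℕ} {x : V} {e : Sym2 V}
    (hcol : c e = α ∨ c e = β) {w : V} (hw : w ∈ e)
    (hr : (chainGraph G c α β).Reachable x w) :
    swapC G c α β x e = if c e = α then β else α := by
  unfold swapC
  rw [if_pos ⟨hcol, w, hw, hr⟩]

lemma swapC_eq_nonchain {G : SimpleGraph V} {c : Sym2 V → ℕ} {α β : ℕ} {x : V} {e : Sym2 V}
    (h1 : c e ≠ α) (h2 : c e ≠ β) : swapC G c α β x e = c e := by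
  unfold swapC
  rw [if_neg]
  rintro ⟨hcol, -⟩
  rcases hcol with h | h
  · exact h1 h
  · exact h2 h

lemma swapC_eq_same {G : SimpleGraph V} {c : Sym2 V → ℕ} {α β : ℕ} {x : V} {e : Sym2 V}
    (he : e ∈ G.edgeSet) {w : V} (hw : w ∈ e)
    (hr : ¬ (chainGraph G c α β).Reachable x w) : swapC G c α β x e = c e := by
  unfold swapC
  rw [if_neg]
  rintro ⟨hcol, hex⟩
  exact hr (chain_reach_transfer he hcol hw hex)

lemma swap_coloring {G : SimpleGraph V} {k : ℕ} {c : Sym2 V → ℕ} (hc : IsEdgeColoring G k c)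
    {α β : ℕ} (hα1 : 1 ≤ α) (hα2 : α ≤ k) (hβ1 : 1 ≤ β) (hβ2 : β ≤ k) (hαβ : α ≠ β) (x : V) :
    IsEdgeColoring G k (swapC G c α β x) := by
  constructor
  · intro e he
    rcases swapC_spec G c α β x e with h | ⟨h, -⟩ | ⟨h, -⟩
    · rw [h]; exact hc.1 e he
    · rw [h]; exact ⟨hβ1, hβ2⟩
    · rw [h]; exact ⟨hα1, hα2⟩
  · rintro e he f hf hef ⟨w, hwe, hwf⟩
    have hne := hc.2 e he f hf hef ⟨w, hwe, hwf⟩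
    by_cases hr : (chainGraph G c α β).Reachable x w
    · by_cases hce : c e = α ∨ c e = β
      · rw [swapC_eq_flip hce hwe hr]
        by_cases hcf : c f = α ∨ c f = β
        · rw [swapC_eq_flip hcf hwf hr]
          rcases hce with h1 | h1 <;> rcases hcf with h2 | h2
          · exact absurd (h1.trans h2.symm) hne
          · rw [if_pos h1, h2, if_neg (Ne.symm hαβ)]
            exact Ne.symm hαβ
          · rw [h1, if_neg (Ne.symm hαβ), if_pos h2]
            exact hαβ
          · exact absurd (h1.trans h2.symm) hne
        · push_neg at hcf
          rw [swapC_eq_nonchain hcf.1 hcf.2]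
          split_ifs with h
          · exact fun hh => hcf.2 hh.symm
          · exact fun hh => hcf.1 hh.symm
      · push_neg at hce
        rw [swapC_eq_nonchain hce.1 hce.2]
        by_cases hcf : c f = α ∨ c f = β
        · rw [swapC_eq_flip hcf hwf hr]
          split_ifs with h
          · exact hce.2
          · exact hce.1
        · push_neg at hcf
          rw [swapC_eq_nonchain hcf.1 hcf.2]
          exact hne
    · rw [swapC_eq_same he hwe hr, swapC_eq_same hf hwf hr]
      exact hne

lemma swap_miss_reach {G : SimpleGraph V} {c : Sym2 V → ℕ} {α β : ℕ} (hαβ : α ≠ β)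
    {x w : V} (hr : (chainGraph G c α β).Reachable x w)
    (hm : Miss G c w α) : Miss G (swapC G c α β x) w β := by
  intro e he hwe
  by_cases hcol : c e = α ∨ c e = β
  · rw [swapC_eq_flip hcol hwe hr]
    split_ifs with h
    · exact absurd h (hm e he hwe)
    · exact hαβ
  · push_neg at hcol
    rw [swapC_eq_nonchain hcol.1 hcol.2]
    exact hcol.2

lemma swap_miss_not_reach {G : SimpleGraph V} {c : Sym2 V → ℕ} {α β : ℕ} {x w : V}
    (hr : ¬ (chainGraph G c α β).Reachable x w) {δ : ℕ} (hm : Miss G c w δ) :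
    Miss G (swapC G c α β x) w δ := fun e he hwe => by
  rw [swapC_eq_same he hwe hr]
  exact hm e he hwe

lemma missing_finset [Fintype V] [DecidableEq V] (G : SimpleGraph V) [DecidableRel G.Adj]
    (e₀ : Sym2 V) {k : ℕ} {c : Sym2 V → ℕ}
    (hc : IsEdgeColoring (G.deleteEdges {e₀}) k c) (v : V) :
    ∃ M : Finset ℕ,
      (∀ δ, δ ∈ M ↔ (1 ≤ δ ∧ δ ≤ k ∧ Miss (G.deleteEdges {e₀}) c v δ)) ∧
      M.card + (G.incidenceFinset v \ {e₀}).card = k := by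
  classical
  set I : Finset (Sym2 V) := G.incidenceFinset v \ {e₀} with hI
  have hmemI : ∀ e, e ∈ I ↔ e ∈ (G.deleteEdges {e₀}).edgeSet ∧ v ∈ e := by
    intro e
    simp only [hI, Finset.mem_sdiff, SimpleGraph.mem_incidenceFinset, Finset.mem_singleton,
      SimpleGraph.edgeSet_deleteEdges, Set.mem_diff, Set.mem_singleton_iff]
    have : e ∈ G.incidenceSet v ↔ e ∈ G.edgeSet ∧ v ∈ e := Iff.rfl
    rw [this]
    tauto
  have hinj : Set.InjOn c ↑I := by
    intro e he f hf hef
    by_contra hne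
    have he' := (hmemI e).mp (Finset.mem_coe.mp he)
    have hf' := (hmemI f).mp (Finset.mem_coe.mp hf)
    exact hc.2 e he'.1 f hf'.1 hne ⟨v, he'.2, hf'.2⟩ hef
  have himg : I.image c ⊆ Finset.Icc 1 k := by
    intro δ hδ
    obtain ⟨e, he, rfl⟩ := Finset.mem_image.mp hδ
    exact Finset.mem_Icc.mpr (hc.1 e ((hmemI e).mp he).1)
  refine ⟨Finset.Icc 1 k \ I.image c, ?_, ?_⟩
  · intro δ
    simp only [Finset.mem_sdiff, Finset.mem_Icc, Finset.mem_image]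
    constructor
    · rintro ⟨⟨h1, h2⟩, h3⟩
      refine ⟨h1, h2, ?_⟩
      intro e he hve hce
      exact h3 ⟨e, (hmemI e).mpr ⟨he, hve⟩, hce⟩
    · rintro ⟨h1, h2, h3⟩
      refine ⟨⟨h1, h2⟩, ?_⟩
      rintro ⟨e, he, hce⟩
      have hh := (hmemI e).mp he
      exact h3 e hh.1 hh.2 hce
  · have hcard : (I.image c).card = I.card := Finset.card_image_of_injOn hinj
    have h1 : (Finset.Icc 1 k \ I.image c).card = (Finset.Icc 1 k).card - (I.image c).card :=
      Finset.card_sdiff_of_subset himg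
    have h2 : (Finset.Icc 1 k).card = k := by rw [Nat.card_Icc]; omega
    have h3 : (I.image c).card ≤ (Finset.Icc 1 k).card := Finset.card_le_card himg
    omega

lemma chain_edges_ne {G : SimpleGraph V} {v u₁ u₂ : V} (h1 : G.Adj v u₁)
    (hne : u₁ ≠ u₂) : Sym2.mk v u₁ ≠ Sym2.mk v u₂ := by
  intro h
  rcases Sym2.eq_iff.mp h with ⟨-, h'⟩ | ⟨h', h''⟩
  · exact hne h'
  · exact h1.ne h''.symm

lemma chain_unique_nbr {G : SimpleGraph V} {k : ℕ} {c : Sym2 V → ℕ}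
    (hc : IsEdgeColoring G k c) {α β : ℕ}
    {v : V} {δ : ℕ} (hδ : δ = α ∨ δ = β) (hm : Miss G c v δ)
    {u₁ u₂ : V} (h1 : (chainGraph G c α β).Adj v u₁) (h2 : (chainGraph G c α β).Adj v u₂) :
    u₁ = u₂ := by
  by_contra hne
  have he1 : Sym2.mk v u₁ ∈ G.edgeSet := G.mem_edgeSet.mpr h1.1
  have he2 : Sym2.mk v u₂ ∈ G.edgeSet := G.mem_edgeSet.mpr h2.1
  have hee : Sym2.mk v u₁ ≠ Sym2.mk v u₂ := chain_edges_ne h1.1 hne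
  have hcc := hc.2 _ he1 _ he2 hee ⟨v, Sym2.mem_mk_left v u₁, Sym2.mem_mk_left v u₂⟩
  have hm1 := hm _ he1 (Sym2.mem_mk_left v u₁)
  have hm2 := hm _ he2 (Sym2.mem_mk_left v u₂)
  have hcol1 := h1.2
  have hcol2 := h2.2
  rcases hδ with rfl | rfl <;> rcases hcol1 with h1' | h1' <;> rcases hcol2 with h2' | h2' <;>
    first
      | exact hm1 h1'
      | exact hm2 h2'
      | exact hcc (h1'.trans h2'.symm)

lemma chain_two_nbrs {G : SimpleGraph V} {k : ℕ} {c : Sym2 V → ℕ}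
    (hc : IsEdgeColoring G k c) {α β : ℕ} {v u₁ u₂ u₃ : V}
    (h1 : (chainGraph G c α β).Adj v u₁) (h2 : (chainGraph G c α β).Adj v u₂)
    (h3 : (chainGraph G c α β).Adj v u₃) :
    u₁ = u₂ ∨ u₁ = u₃ ∨ u₂ = u₃ := by
  by_contra h
  push_neg at h
  obtain ⟨h12, h13, h23⟩ := h
  have he1 : Sym2.mk v u₁ ∈ G.edgeSet := G.mem_edgeSet.mpr h1.1
  have he2 : Sym2.mk v u₂ ∈ G.edgeSet := G.mem_edgeSet.mpr h2.1
  have he3 : Sym2.mk v u₃ ∈ G.edgeSet := G.mem_edgeSet.mpr h3.1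
  have c12 := hc.2 _ he1 _ he2 (chain_edges_ne h1.1 h12)
    ⟨v, Sym2.mem_mk_left v u₁, Sym2.mem_mk_left v u₂⟩
  have c13 := hc.2 _ he1 _ he3 (chain_edges_ne h1.1 h13)
    ⟨v, Sym2.mem_mk_left v u₁, Sym2.mem_mk_left v u₃⟩
  have c23 := hc.2 _ he2 _ he3 (chain_edges_ne h2.1 h23)
    ⟨v, Sym2.mem_mk_left v u₂, Sym2.mem_mk_left v u₃⟩
  rcases h1.2 with a1 | a1 <;> rcases h2.2 with a2 | a2 <;> rcases h3.2 with a3 | a3 <;>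
    first
      | exact c12 (a1.trans a2.symm)
      | exact c13 (a1.trans a3.symm)
      | exact c23 (a2.trans a3.symm)

lemma path_internal_nbrs [DecidableEq V] {H : SimpleGraph V} {a b : V} {p : H.Walk a b}
    (hp : p.IsPath) {w : V} (hw : w ∈ p.support) (hwa : w ≠ a) (hwb : w ≠ b) :
    ∃ y y', y ≠ y' ∧ H.Adj w y ∧ H.Adj w y' ∧ y ∈ p.support ∧ y' ∈ p.support := by
  have hspec : p = (p.takeUntil w hw).append (p.dropUntil w hw) := (p.take_spec hw).symm
  set q := p.takeUntil w hw with hqdef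
  set r := p.dropUntil w hw with hrdef
  have hqp : q.IsPath := hp.takeUntil hw
  have hrp : r.IsPath := hp.dropUntil hw
  obtain ⟨y, hadj1, q₁, hq₁⟩ := SimpleGraph.Walk.exists_eq_cons_of_ne hwa q.reverse
  obtain ⟨y', hadj2, r₁, hr₁⟩ := SimpleGraph.Walk.exists_eq_cons_of_ne hwb r
  have hyq : y ∈ q.support := by
    have h1 : y ∈ q.reverse.support := by
      rw [hq₁, SimpleGraph.Walk.support_cons]
      exact List.mem_cons_of_mem _ q₁.start_mem_support
    rwa [SimpleGraph.Walk.support_reverse, List.mem_reverse] at h1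
  have hy'r : y' ∈ r.support.tail := by
    rw [hr₁, SimpleGraph.Walk.support_cons]
    exact r₁.start_mem_support
  have hyy' : y ≠ y' := by
    intro h
    subst h
    have hnodup := hp.support_nodup
    rw [hspec, SimpleGraph.Walk.support_append] at hnodup
    exact List.disjoint_of_nodup_append hnodup hyq hy'r
  refine ⟨y, y', hyy', hadj1, hadj2, ?_, ?_⟩
  · rw [hspec, SimpleGraph.Walk.support_append]
    exact List.mem_append_left _ hyq
  · rw [hspec, SimpleGraph.Walk.support_append]
    exact List.mem_append_right _ hy'r

lemma support_closed [DecidableEq V] {H : SimpleGraph V} {a b : V} {p : H.Walk a b}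
    (hp : p.IsPath) (hab : a ≠ b)
    (htwo : ∀ v u₁ u₂ u₃, H.Adj v u₁ → H.Adj v u₂ → H.Adj v u₃ → u₁ = u₂ ∨ u₁ = u₃ ∨ u₂ = u₃)
    (hone_a : ∀ u₁ u₂, H.Adj a u₁ → H.Adj a u₂ → u₁ = u₂)
    (hone_b : ∀ u₁ u₂, H.Adj b u₁ → H.Adj b u₂ → u₁ = u₂) :
    ∀ w ∈ p.support, ∀ z, H.Adj w z → z ∈ p.support := by
  intro w hw z hz
  by_contra hzs
  by_cases hwa : w = a
  · subst hwa
    obtain ⟨y, hadj, q, hq⟩ := SimpleGraph.Walk.exists_eq_cons_of_ne hab p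
    have hzy : z = y := hone_a z y hz hadj
    subst hzy
    apply hzs
    rw [hq, SimpleGraph.Walk.support_cons]
    exact List.mem_cons_of_mem _ q.start_mem_support
  · by_cases hwb : w = b
    · subst hwb
      obtain ⟨y, hadj, q, hq⟩ := SimpleGraph.Walk.exists_eq_cons_of_ne (Ne.symm hab) p.reverse
      have hzy : z = y := hone_b z y hz hadj
      subst hzy
      apply hzs
      have h1 : z ∈ p.reverse.support := by
        rw [hq, SimpleGraph.Walk.support_cons]
        exact List.mem_cons_of_mem _ q.start_mem_support
      rwa [SimpleGraph.Walk.support_reverse, List.mem_reverse] at h1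
    · obtain ⟨y, y', hyy', h1, h2, hy, hy'⟩ := path_internal_nbrs hp hw hwa hwb
      rcases htwo w z y y' hz h1 h2 with h | h | h
      · exact hzs (by rw [h]; exact hy)
      · exact hzs (by rw [h]; exact hy')
      · exact hyy' h

lemma walk_mem_support {H : SimpleGraph V} {a b : V} {p : H.Walk a b}
    (hclosed : ∀ w ∈ p.support, ∀ z, H.Adj w z → z ∈ p.support) :
    ∀ (u w : V), (H.Walk u w) → u ∈ p.support → w ∈ p.support := by
  intro u w q
  induction q with
  | nil => exact id
  | cons h q ih => intro hu; exact ih (hclosed _ hu _ h)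

theorem main_aux {V : Type*} [Fintype V] [DecidableEq V]
    (Δ : ℕ) (G : SimpleGraph V) [DecidableRel G.Adj]
    (hΔ : G.maxDegree = Δ) (hclass2 : chromIndex G = Δ + 1)
    (a b : V) (hab : G.Adj a b) (hfd : G.degree a + G.degree b = Δ + 2)
    (hcrit : IsCriticalEdge G (Sym2.mk a b))
    (x : V) (hax : G.Adj a x) (hxb : x ≠ b) : G.degree x = Δ := by
  by_contra hdx
  set G' := G.deleteEdges {Sym2.mk a b} with hG'
  have hxa : x ≠ a := Ne.symm hax.ne
  have hneab : a ≠ b := hab.ne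
  have heab : Sym2.mk a b ∈ G.edgeSet := G.mem_edgeSet.mpr hab
  obtain ⟨c, hc⟩ : ∃ c, IsEdgeColoring G' Δ c := by
    obtain ⟨c0, hc0⟩ := exists_chromIndex_coloring G'
    have hlt : chromIndex G' < Δ + 1 := by
      have h := hcrit.2
      rw [hclass2] at h
      exact h
    exact ⟨c0, coloring_mono hc0 (by omega)⟩
  have hedge' : G'.edgeSet = G.edgeSet \ {Sym2.mk a b} := SimpleGraph.edgeSet_deleteEdges _
  have ext_contra : ∀ (c' : Sym2 V → ℕ), IsEdgeColoring G' Δ c' →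
      ∀ δ, 1 ≤ δ → δ ≤ Δ → Miss G' c' a δ → Miss G' c' b δ → False := by
    intro c' hc' δ h1 h2 hma hmb
    have hcol := extend_coloring heab hc' h1 h2 hma hmb
    have hle := chromIndex_le hcol
    omega
  obtain ⟨Ma, hMa, hMacard⟩ := missing_finset G (Sym2.mk a b) hc a
  obtain ⟨Mb, hMb, hMbcard⟩ := missing_finset G (Sym2.mk a b) hc b
  obtain ⟨Mx, hMx, hMxcard⟩ := missing_finset G (Sym2.mk a b) hc x
  have hia : (G.incidenceFinset a \ {Sym2.mk a b}).card = G.degree a - 1 := by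
    have hmem : Sym2.mk a b ∈ G.incidenceFinset a := by
      rw [SimpleGraph.mem_incidenceFinset]
      exact ⟨heab, Sym2.mem_mk_left a b⟩
    rw [Finset.card_sdiff_of_subset (Finset.singleton_subset_iff.mpr hmem), Finset.card_singleton,
      SimpleGraph.card_incidenceFinset_eq_degree]
  have hib : (G.incidenceFinset b \ {Sym2.mk a b}).card = G.degree b - 1 := by
    have hmem : Sym2.mk a b ∈ G.incidenceFinset b := by
      rw [SimpleGraph.mem_incidenceFinset]
      exact ⟨heab, Sym2.mem_mk_right a b⟩
    rw [Finset.card_sdiff_of_subset (Finset.singleton_subset_iff.mpr hmem), Finset.card_singleton,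
      SimpleGraph.card_incidenceFinset_eq_degree]
  have hix : (G.incidenceFinset x \ {Sym2.mk a b}).card = G.degree x := by
    have hmem : Sym2.mk a b ∉ G.incidenceFinset x := by
      rw [SimpleGraph.mem_incidenceFinset]
      rintro ⟨-, hmem⟩
      rcases Sym2.mem_iff.mp hmem with rfl | rfl
      · exact hxa rfl
      · exact hxb rfl
    rw [Finset.sdiff_singleton_eq_erase, Finset.erase_eq_of_notMem hmem,
      SimpleGraph.card_incidenceFinset_eq_degree]
  rw [hia] at hMacard
  rw [hib] at hMbcard
  rw [hix] at hMxcard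
  have hda : G.degree a ≤ Δ := hΔ ▸ G.degree_le_maxDegree a
  have hdb : G.degree b ≤ Δ := hΔ ▸ G.degree_le_maxDegree b
  have hdxle : G.degree x ≤ Δ := hΔ ▸ G.degree_le_maxDegree x
  have hda1 : 0 < G.degree a := (G.degree_pos_iff_exists_adj a).mpr ⟨b, hab⟩
  have hdb1 : 0 < G.degree b := (G.degree_pos_iff_exists_adj b).mpr ⟨a, hab.symm⟩
  have hdisj : Disjoint Ma Mb := by
    rw [Finset.disjoint_left]
    intro δ h1 h2
    obtain ⟨q1, q2, q3⟩ := (hMa δ).mp h1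
    obtain ⟨-, -, q4⟩ := (hMb δ).mp h2
    exact ext_contra c hc δ q1 q2 q3 q4
  have hsub : Ma ∪ Mb ⊆ Finset.Icc 1 Δ := by
    intro δ hδ
    rcases Finset.mem_union.mp hδ with h | h
    · obtain ⟨q1, q2, -⟩ := (hMa δ).mp h
      exact Finset.mem_Icc.mpr ⟨q1, q2⟩
    · obtain ⟨q1, q2, -⟩ := (hMb δ).mp h
      exact Finset.mem_Icc.mpr ⟨q1, q2⟩
  have hunion : Ma ∪ Mb = Finset.Icc 1 Δ := by
    apply Finset.eq_of_subset_of_card_le hsub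
    rw [Finset.card_union_of_disjoint hdisj, Nat.card_Icc]
    omega
  have hMxpos : 0 < Mx.card := by omega
  obtain ⟨α, hα⟩ := Finset.card_pos.mp hMxpos
  obtain ⟨hα1, hα2, hαx⟩ := (hMx α).mp hα
  have heax : Sym2.mk a x ∈ G'.edgeSet := by
    rw [hedge']
    refine ⟨G.mem_edgeSet.mpr hax, ?_⟩
    intro h
    rw [Set.mem_singleton_iff] at h
    rcases Sym2.eq_iff.mp h with ⟨-, h2⟩ | ⟨h1, -⟩
    · exact hxb h2
    · exact hneab h1
  set γ := c (Sym2.mk a x) with hγdef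
  have hγbounds := hc.1 _ heax
  have hγα : γ ≠ α := hαx _ heax (Sym2.mem_mk_right a x)
  have hγMb : Miss G' c b γ := by
    have hγIcc : γ ∈ Finset.Icc 1 Δ := Finset.mem_Icc.mpr ⟨hγbounds.1, hγbounds.2⟩
    have hγu : γ ∈ Ma ∪ Mb := hunion ▸ hγIcc
    rcases Finset.mem_union.mp hγu with h | h
    · obtain ⟨-, -, hmiss⟩ := (hMa γ).mp h
      exact absurd hγdef.symm (hmiss _ heax (Sym2.mem_mk_left a x))
    · exact ((hMb γ).mp h).2.2
  have hαIcc : α ∈ Finset.Icc 1 Δ := Finset.mem_Icc.mpr ⟨hα1, hα2⟩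
  have hαab : α ∈ Ma ∪ Mb := hunion ▸ hαIcc
  rcases Finset.mem_union.mp hαab with hαa | hαb
  · -- Case 1: α missing at a
    have hαma : Miss G' c a α := ((hMa α).mp hαa).2.2
    have hc₂ : IsEdgeColoring G' Δ (fun e => if e = Sym2.mk a x then α else c e) :=
      recolor_coloring hc heax hα1 hα2 hαma hαx
    have hma : Miss G' (fun e => if e = Sym2.mk a x then α else c e) a γ := by
      intro e he hae
      show (if e = Sym2.mk a x then α else c e) ≠ γ
      by_cases h : e = Sym2.mk a x
      · rw [if_pos h]
        exact fun hh => hγα hh.symm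
      · rw [if_neg h]
        exact fun hh =>
          hc.2 e he _ heax h ⟨a, hae, Sym2.mem_mk_left a x⟩ (hh.trans hγdef)
    have hmb : Miss G' (fun e => if e = Sym2.mk a x then α else c e) b γ := by
      intro e he hbe
      have h : e ≠ Sym2.mk a x := by
        intro hh
        subst hh
        rcases Sym2.mem_iff.mp hbe with h | h
        · exact hneab h.symm
        · exact hxb h.symm
      show (if e = Sym2.mk a x then α else c e) ≠ γ
      rw [if_neg h]
      exact hγMb e he hbe
    exact ext_contra _ hc₂ γ hγbounds.1 hγbounds.2 hma hmb
  · -- Case 2: α missing at b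
    have hαmb : Miss G' c b α := ((hMb α).mp hαb).2.2
    have hMapos : 0 < Ma.card := by omega
    obtain ⟨β, hβ⟩ := Finset.card_pos.mp hMapos
    obtain ⟨hβ1, hβ2, hβa⟩ := (hMa β).mp hβ
    have hαβ : α ≠ β := by
      intro h
      subst h
      exact Finset.disjoint_left.mp hdisj hβ hαb
    have hγβ : γ ≠ β := fun hh => hβa _ heax (Sym2.mem_mk_left a x) (hγdef.symm.trans hh)
    by_cases hra : (chainGraph G' c α β).Reachable x a
    · by_cases hrb : (chainGraph G' c α β).Reachable b a
      · -- a, b, x all in one (α,β)-chain: contradiction via path structure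
        have hone_a : ∀ u₁ u₂, (chainGraph G' c α β).Adj a u₁ →
            (chainGraph G' c α β).Adj a u₂ → u₁ = u₂ :=
          fun u₁ u₂ h1 h2 => chain_unique_nbr hc (Or.inr rfl) hβa h1 h2
        have hone_b : ∀ u₁ u₂, (chainGraph G' c α β).Adj b u₁ →
            (chainGraph G' c α β).Adj b u₂ → u₁ = u₂ :=
          fun u₁ u₂ h1 h2 => chain_unique_nbr hc (Or.inl rfl) hαmb h1 h2
        have hone_x : ∀ u₁ u₂, (chainGraph G' c α β).Adj x u₁ →
            (chainGraph G' c α β).Adj x u₂ → u₁ = u₂ :=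
          fun u₁ u₂ h1 h2 => chain_unique_nbr hc (Or.inl rfl) hαx h1 h2
        have htwo : ∀ v u₁ u₂ u₃, (chainGraph G' c α β).Adj v u₁ →
            (chainGraph G' c α β).Adj v u₂ → (chainGraph G' c α β).Adj v u₃ →
            u₁ = u₂ ∨ u₁ = u₃ ∨ u₂ = u₃ :=
          fun v u₁ u₂ u₃ h1 h2 h3 => chain_two_nbrs hc h1 h2 h3
        obtain ⟨p0⟩ := hrb.symm
        obtain ⟨p, hp⟩ := p0.toPath
        have hclosed := support_closed hp hneab htwo hone_a hone_b
        have hxsupp : x ∈ p.support := by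
          obtain ⟨q⟩ := hra.symm
          exact walk_mem_support hclosed a x q p.start_mem_support
        obtain ⟨y, y', hyy', h1, h2, -, -⟩ := path_internal_nbrs hp hxsupp hxa hxb
        exact hyy' (hone_x y y' h1 h2)
      · -- swap colors on the chain containing b
        have hswap := swap_coloring hc hα1 hα2 hβ1 hβ2 hαβ b
        have hmb : Miss G' (swapC G' c α β b) b β :=
          swap_miss_reach hαβ (SimpleGraph.Reachable.refl b) hαmb
        have hma : Miss G' (swapC G' c α β b) a β := swap_miss_not_reach hrb hβa
        exact ext_contra _ hswap β hβ1 hβ2 hma hmb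
    · -- swap colors on the chain containing x, then recolor ax with β
      have hc₃ : IsEdgeColoring G' Δ (swapC G' c α β x) :=
        swap_coloring hc hα1 hα2 hβ1 hβ2 hαβ x
      have hmx3 : Miss G' (swapC G' c α β x) x β :=
        swap_miss_reach hαβ (SimpleGraph.Reachable.refl x) hαx
      have hma3 : Miss G' (swapC G' c α β x) a β := swap_miss_not_reach hra hβa
      have hkeya : ∀ e ∈ G'.edgeSet, a ∈ e → swapC G' c α β x e = c e :=
        fun e he hae => swapC_eq_same he hae hra
      have hc₄ : IsEdgeColoring G' Δ
          (fun e => if e = Sym2.mk a x then β else swapC G' c α β x e) :=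
        recolor_coloring hc₃ heax hβ1 hβ2 hma3 hmx3
      have hma4 : Miss G' (fun e => if e = Sym2.mk a x then β else swapC G' c α β x e) a γ := by
        intro e he hae
        show (if e = Sym2.mk a x then β else swapC G' c α β x e) ≠ γ
        by_cases h : e = Sym2.mk a x
        · rw [if_pos h]
          exact fun hh => hγβ hh.symm
        · rw [if_neg h, hkeya e he hae]
          exact fun hh =>
            hc.2 e he _ heax h ⟨a, hae, Sym2.mem_mk_left a x⟩ (hh.trans hγdef)
      have hmb4 : Miss G' (fun e => if e = Sym2.mk a x then β else swapC G' c α β x e) b γ := by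
        intro e he hbe
        have h : e ≠ Sym2.mk a x := by
          intro hh
          subst hh
          rcases Sym2.mem_iff.mp hbe with h | h
          · exact hneab h.symm
          · exact hxb h.symm
        show (if e = Sym2.mk a x then β else swapC G' c α β x e) ≠ γ
        rw [if_neg h]
        rcases swapC_spec G' c α β x e with hs | ⟨hs, -⟩ | ⟨hs, -⟩
        · rw [hs]
          exact hγMb e he hbe
        · rw [hs]
          exact fun hh => hγβ hh.symm
        · rw [hs]
          exact fun hh => hγα hh.symm
      exact ext_contra _ hc₄ γ hγbounds.1 hγbounds.2 hma4 hmb4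

end FDP

/-- Let `G` be an `n`-vertex Class 2 graph with maximum degree `Δ` having
a full-deficiency pair `(a,b)` with `ab` a critical edge. Then every vertex
`x ∈ (N(a) ∪ N(b)) \ {a,b}` has `d_G(x) = Δ`. -/
theorem fullDeficiencyPair_neighbors_max_degree
    {V : Type*} [Fintype V] [DecidableEq V]
    (n Δ : ℕ) (G : SimpleGraph V) [DecidableRel G.Adj]
    (hcard : Fintype.card V = n)
    (hΔ : G.maxDegree = Δ) (hclass2 : chromIndex G = Δ + 1)
    (a b : V) (hab : G.Adj a b) (hfd : G.degree a + G.degree b = Δ + 2)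
    (hcrit : IsCriticalEdge G (Sym2.mk a b))
    (x : V) (hx : x ∈ G.neighborFinset a ∪ G.neighborFinset b) (hxa : x ≠ a) (hxb : x ≠ b) :
    G.degree x = Δ := by
  rcases Finset.mem_union.mp hx with h | h
  · exact FDP.main_aux Δ G hΔ hclass2 a b hab hfd hcrit x
      ((G.mem_neighborFinset a x).mp h) hxb
  · refine FDP.main_aux Δ G hΔ hclass2 b a hab.symm (by omega) ?_ x
      ((G.mem_neighborFinset b x).mp h) hxa
    have heq : Sym2.mk b a = Sym2.mk a b := Sym2.eq_swap
    rw [heq]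
    exact hcrit
end

section
/- Let G be an n-vertex Class 2 simple graph with maximum degree Δ having a full-deficiency pair (a,b) such that ab is a critical edge of G. Then for every vertex x ∈ V(G) ∖ {a,b} with d_G(x) ≥ n − |N_G(a) ∪ N_G(b)|, we have d_G(x) ≥ Δ−1; furthermore, if d_G(a) < Δ and d_G(b) < Δ, then d_G(x) = Δ. -/
set_option linter.unusedVariables false
set_option linter.unreachableTactic false
set_option linter.unusedTactic false

set_option linter.unusedSectionVars false
set_option maxHeartbeats 1000000

namespace EC
open SimpleGraph Finset
open scoped Classical

variable {V : Type*} [Fintype V] [DecidableEq V] (H : SimpleGraph V) [DecidableRel H.Adj] (Δ : ℕ)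

def Mi (c : Sym2 V → ℕ) (v : V) : Finset ℕ :=
  (Finset.Icc 1 Δ).filter fun α => ∀ e ∈ H.edgeFinset, v ∈ e → c e ≠ α

variable {H Δ}

lemma mem_Mi {c : Sym2 V → ℕ} {v : V} {α : ℕ} :
    α ∈ Mi H Δ c v ↔ (1 ≤ α ∧ α ≤ Δ) ∧ ∀ e ∈ H.edgeSet, v ∈ e → c e ≠ α := by
  simp [Mi, Finset.mem_filter, Finset.mem_Icc, SimpleGraph.mem_edgeFinset, and_assoc]

noncomputable def swapC (c : Sym2 V → ℕ) (γ δ : ℕ) (R : Set V) : Sym2 V → ℕ := fun e =>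
  if (c e = γ ∨ c e = δ) ∧ (∃ v ∈ R, v ∈ e) then (if c e = γ then δ else γ) else c e

section Swap

variable {c : Sym2 V → ℕ} {γ δ : ℕ} {R : Set V}

/-- `R` is closed under chain steps -/
def Closed (c : Sym2 V → ℕ) (γ δ : ℕ) (R : Set V) : Prop :=
  ∀ u w : V, u ∈ R → H.Adj u w → (c s(u, w) = γ ∨ c s(u, w) = δ) → w ∈ R

lemma swap_not_pair (e : Sym2 V) (h1 : c e ≠ γ) (h2 : c e ≠ δ) :
    swapC c γ δ R e = c e := by
  unfold swapC
  rw [if_neg]; rintro ⟨h | h, -⟩ <;> simp_all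

lemma touch_mem {e : Sym2 V} (hcl : Closed (H := H) c γ δ R) (he : e ∈ H.edgeSet)
    (hpair : c e = γ ∨ c e = δ) (htouch : ∃ v ∈ R, v ∈ e) : ∀ v ∈ e, v ∈ R := by
  induction e with
  | _ u w =>
    obtain ⟨v, hvR, hve⟩ := htouch
    rw [Sym2.mem_iff] at hve
    have hadj : H.Adj u w := (SimpleGraph.mem_edgeSet H).mp he
    intro z hz
    rw [Sym2.mem_iff] at hz
    rcases hve with rfl | rfl <;> rcases hz with rfl | rfl
    · exact hvR
    · exact hcl _ _ hvR hadj hpair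
    · exact hcl _ _ hvR hadj.symm (by rwa [Sym2.eq_swap])
    · exact hvR

lemma swap_edge_not_mem (hcl : Closed (H := H) c γ δ R) {e : Sym2 V} {v : V}
    (he : e ∈ H.edgeSet) (hv : v ∈ e) (hvR : v ∉ R) :
    swapC c γ δ R e = c e := by
  unfold swapC
  rw [if_neg]
  rintro ⟨hpair, htouch⟩
  exact hvR (touch_mem hcl he hpair htouch v hv)

lemma swap_gamma {e : Sym2 V} {v : V} (hv : v ∈ e) (hvR : v ∈ R) (hce : c e = γ) :
    swapC c γ δ R e = δ := by
  unfold swapC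
  rw [if_pos ⟨Or.inl hce, v, hvR, hv⟩, if_pos hce]

lemma swap_delta (hne : γ ≠ δ) {e : Sym2 V} {v : V} (hv : v ∈ e) (hvR : v ∈ R)
    (hce : c e = δ) : swapC c γ δ R e = γ := by
  unfold swapC
  rw [if_pos ⟨Or.inr hce, v, hvR, hv⟩, if_neg (by rw [hce]; exact hne.symm)]

lemma swap_proper (hc : IsEdgeColoring H Δ c) (hγ : 1 ≤ γ ∧ γ ≤ Δ) (hδ : 1 ≤ δ ∧ δ ≤ Δ)
    (hcl : Closed (H := H) c γ δ R) : IsEdgeColoring H Δ (swapC c γ δ R) := by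
  have hval : ∀ e, swapC c γ δ R e = c e ∨
      (swapC c γ δ R e = γ ∨ swapC c γ δ R e = δ) ∧ (c e = γ ∨ c e = δ) := by
    intro e
    unfold swapC
    split
    · rename_i hcond
      right
      refine ⟨?_, hcond.1⟩
      split <;> simp
    · left; rfl
  constructor
  · intro e he
    rcases hval e with h | ⟨h, -⟩
    · rw [h]; exact hc.1 e he
    · rcases h with h | h <;> rw [h] <;> [exact hγ; exact hδ] 
  · intro e he f hf hef ⟨v, hve, hvf⟩ hcc
    -- cases on whether each is swapped
    by_cases hse : (c e = γ ∨ c e = δ) ∧ (∃ u ∈ R, u ∈ e) <;>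
      by_cases hsf : (c f = γ ∨ c f = δ) ∧ (∃ u ∈ R, u ∈ f)
    · -- both swapped: swap is injective on {γ, δ}
      have h1 : swapC c γ δ R e = (if c e = γ then δ else γ) := by
        unfold swapC; rw [if_pos hse]
      have h2 : swapC c γ δ R f = (if c f = γ then δ else γ) := by
        unfold swapC; rw [if_pos hsf]
      rw [h1, h2] at hcc
      have hne : γ ≠ δ := by
        intro h
        subst h
        have hce : c e = γ := by rcases hse.1 with h | h <;> exact h
        have hcf : c f = γ := by rcases hsf.1 with h | h <;> exact h
        exact hc.2 e he f hf hef ⟨v, hve, hvf⟩ (by rw [hce, hcf])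
      have : c e = c f := by
        rcases hse.1 with h | h <;> rcases hsf.1 with h' | h' <;>
          simp [h, h', hne, hne.symm] at hcc ⊢ <;> omega
      exact hc.2 e he f hf hef ⟨v, hve, hvf⟩ this
    · -- e swapped, f not: then v ∈ R, so f would be swapped if pair-colored
      have hvR : v ∈ R := touch_mem hcl he hse.1 hse.2 v hve
      have hfnp : ¬ (c f = γ ∨ c f = δ) := by
        intro hp
        exact hsf ⟨hp, v, hvR, hvf⟩
      have h2 : swapC c γ δ R f = c f := by unfold swapC; rw [if_neg]; rintro ⟨h, -⟩; exact hfnp h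
      have h1 : swapC c γ δ R e = γ ∨ swapC c γ δ R e = δ := by
        unfold swapC; rw [if_pos hse]; split <;> simp
      rw [h2] at hcc
      rcases h1 with h | h <;> rw [h] at hcc <;> exact hfnp (by omega)
    · have hvR : v ∈ R := touch_mem hcl hf hsf.1 hsf.2 v hvf
      have henp : ¬ (c e = γ ∨ c e = δ) := by
        intro hp
        exact hse ⟨hp, v, hvR, hve⟩
      have h1 : swapC c γ δ R e = c e := by unfold swapC; rw [if_neg]; rintro ⟨h, -⟩; exact henp h
      have h2 : swapC c γ δ R f = γ ∨ swapC c γ δ R f = δ := by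
        unfold swapC; rw [if_pos hsf]; split <;> simp
      rw [h1] at hcc
      rcases h2 with h | h <;> rw [h] at hcc <;> exact henp (by omega)
    · have h1 : swapC c γ δ R e = c e := by unfold swapC; rw [if_neg hse]
      have h2 : swapC c γ δ R f = c f := by unfold swapC; rw [if_neg hsf]
      rw [h1, h2] at hcc
      exact hc.2 e he f hf hef ⟨v, hve, hvf⟩ hcc

lemma Mi_swap_other {v : V} {α : ℕ} (hα1 : α ≠ γ) (hα2 : α ≠ δ) :
    (α ∈ Mi H Δ (swapC c γ δ R) v ↔ α ∈ Mi H Δ c v) := by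
  rw [mem_Mi, mem_Mi]
  apply and_congr_right'
  apply forall₂_congr
  intro e he
  apply imp_congr_right
  intro hv
  constructor <;> intro h hcon
  · by_cases hp : (c e = γ ∨ c e = δ) ∧ (∃ u ∈ R, u ∈ e)
    · rcases hp.1 with h' | h' <;> omega
    · exact h (by unfold swapC; rw [if_neg hp]; exact hcon)
  · by_cases hp : (c e = γ ∨ c e = δ) ∧ (∃ u ∈ R, u ∈ e)
    · have : swapC c γ δ R e = γ ∨ swapC c γ δ R e = δ := by
        unfold swapC; rw [if_pos hp]; split <;> simp
      rcases this with h' | h' <;> omega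
    · have : swapC c γ δ R e = c e := by unfold swapC; rw [if_neg hp]
      omega

lemma Mi_swap_gamma {v : V} (hne : γ ≠ δ) (hv : v ∈ R) (hγ : 1 ≤ γ ∧ γ ≤ Δ)
    (hδ : 1 ≤ δ ∧ δ ≤ Δ) :
    (γ ∈ Mi H Δ (swapC c γ δ R) v ↔ δ ∈ Mi H Δ c v) := by
  rw [mem_Mi, mem_Mi]
  constructor
  · rintro ⟨-, h⟩
    refine ⟨hδ, fun e he hve hcon => ?_⟩
    exact h e he hve (swap_delta hne hve hv hcon)
  · rintro ⟨-, h⟩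
    refine ⟨hγ, fun e he hve hcon => ?_⟩
    by_cases hp : (c e = γ ∨ c e = δ) ∧ (∃ u ∈ R, u ∈ e)
    · have : c e = δ := by
        rcases hp.1 with h' | h'
        · exfalso
          have := swap_gamma (δ := δ) (R := R) hve hv h'
          omega
        · exact h'
      exact h e he hve this
    · have heq : swapC c γ δ R e = c e := by unfold swapC; rw [if_neg hp]
      rw [heq] at hcon
      exact hp ⟨Or.inl hcon, v, hv, hve⟩

lemma Mi_swap_delta {v : V} (hne : γ ≠ δ) (hv : v ∈ R) (hγ : 1 ≤ γ ∧ γ ≤ Δ)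
    (hδ : 1 ≤ δ ∧ δ ≤ Δ) :
    (δ ∈ Mi H Δ (swapC c γ δ R) v ↔ γ ∈ Mi H Δ c v) := by
  rw [mem_Mi, mem_Mi]
  constructor
  · rintro ⟨-, h⟩
    refine ⟨hγ, fun e he hve hcon => ?_⟩
    exact h e he hve (swap_gamma hve hv hcon)
  · rintro ⟨-, h⟩
    refine ⟨hδ, fun e he hve hcon => ?_⟩
    by_cases hp : (c e = γ ∨ c e = δ) ∧ (∃ u ∈ R, u ∈ e)
    · have : c e = γ := by
        rcases hp.1 with h' | h'
        · exact h'
        · exfalso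
          have := swap_delta (γ := γ) (R := R) hne hve hv h'
          omega
      exact h e he hve this
    · have heq : swapC c γ δ R e = c e := by unfold swapC; rw [if_neg hp]
      rw [heq] at hcon
      exact hp ⟨Or.inr hcon, v, hv, hve⟩

lemma Mi_swap_not_mem (hcl : Closed (H := H) c γ δ R) {v : V} (hv : v ∉ R) :
    Mi H Δ (swapC c γ δ R) v = Mi H Δ c v := by
  ext α
  rw [mem_Mi, mem_Mi]
  apply and_congr_right'
  apply forall₂_congr
  intro e he
  apply imp_congr_right
  intro hve
  rw [swap_edge_not_mem hcl he hve hv]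

end Swap

lemma color_unique {c : Sym2 V → ℕ} (hc : IsEdgeColoring H Δ c) {e f : Sym2 V} {v : V}
    (he : e ∈ H.edgeSet) (hf : f ∈ H.edgeSet) (hv : v ∈ e) (hv' : v ∈ f)
    (hcc : c e = c f) : e = f := by
  by_contra hne
  exact hc.2 e he f hf hne ⟨v, hv, hv'⟩ hcc

lemma not_mem_Mi_of_edge {c : Sym2 V → ℕ} {e : Sym2 V} {v : V}
    (he : e ∈ H.edgeSet) (hv : v ∈ e) : c e ∉ Mi H Δ c v := by
  intro h
  exact (mem_Mi.mp h).2 e he hv rfl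

lemma card_Mi {c : Sym2 V → ℕ} (hc : IsEdgeColoring H Δ c) {v : V}
    (hdeg : H.degree v ≤ Δ) : (Mi H Δ c v).card = Δ - H.degree v := by
  classical
  have hMi : Mi H Δ c v = Finset.Icc 1 Δ \ (H.incidenceFinset v).image c := by
    ext α
    simp only [Mi, Finset.mem_filter, Finset.mem_sdiff, Finset.mem_image, not_exists, not_and]
    constructor
    · rintro ⟨hα, h⟩
      refine ⟨hα, fun e he hce => ?_⟩
      rw [SimpleGraph.mem_incidenceFinset] at he
      exact h e (by rw [SimpleGraph.mem_edgeFinset]; exact he.1) he.2 hce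
    · rintro ⟨hα, h⟩
      refine ⟨hα, fun e he hve hce => ?_⟩
      rw [SimpleGraph.mem_edgeFinset] at he
      exact h e (by rw [SimpleGraph.mem_incidenceFinset]; exact ⟨he, hve⟩) hce
  have hinj : Set.InjOn c (H.incidenceFinset v : Set (Sym2 V)) := by
    intro e he f hf hef
    simp only [Finset.mem_coe, SimpleGraph.mem_incidenceFinset] at he hf
    exact color_unique hc he.1 hf.1 he.2 hf.2 hef
  have hsub : (H.incidenceFinset v).image c ⊆ Finset.Icc 1 Δ := by
    intro α hα
    rw [Finset.mem_image] at hα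
    obtain ⟨e, he, rfl⟩ := hα
    rw [SimpleGraph.mem_incidenceFinset] at he
    have := hc.1 e he.1
    rw [Finset.mem_Icc]; exact this
  rw [hMi, Finset.card_sdiff_of_subset hsub, Finset.card_image_of_injOn hinj,
    SimpleGraph.card_incidenceFinset_eq_degree, Nat.card_Icc]
  simp

/-- the (γ,δ)-chain graph on `H` -/
def CG (c : Sym2 V → ℕ) (γ δ : ℕ) : SimpleGraph V where
  Adj u w := H.Adj u w ∧ (c s(u, w) = γ ∨ c s(u, w) = δ)
  symm := ⟨by
    intro u w h
    refine ⟨h.1.symm, ?_⟩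
    rw [Sym2.eq_swap]; exact h.2⟩
  loopless := ⟨fun u h => H.loopless.irrefl u h.1⟩

/-- a vertex missing one of the chain colors has at most one chain neighbor -/
lemma cg_unique_nbr {c : Sym2 V → ℕ} {γ δ : ℕ} (hc : IsEdgeColoring H Δ c) {v : V}
    (hmiss : γ ∈ Mi H Δ c v ∨ δ ∈ Mi H Δ c v) {w z : V}
    (hw : (CG (H := H) c γ δ).Adj v w) (hz : (CG (H := H) c γ δ).Adj v z) : w = z := by
  have hew : s(v, w) ∈ H.edgeSet := hw.1
  have hez : s(v, z) ∈ H.edgeSet := hz.1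
  have hcc : c s(v, w) = c s(v, z) := by
    rcases hmiss with hm | hm <;>
    · have h1 := (mem_Mi.mp hm).2 s(v, w) hew (Sym2.mem_mk_left v w)
      have h2 := (mem_Mi.mp hm).2 s(v, z) hez (Sym2.mem_mk_left v z)
      rcases hw.2 with h | h <;> rcases hz.2 with h' | h' <;> omega
  have := color_unique hc hew hez (Sym2.mem_mk_left v w) (Sym2.mem_mk_left v z) hcc
  exact Sym2.congr_right.mp this

/-- every vertex has at most 2 chain neighbors -/
lemma cg_two_nbrs {c : Sym2 V → ℕ} {γ δ : ℕ} (hc : IsEdgeColoring H Δ c) {v w₁ w₂ w₃ : V}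
    (h1 : (CG (H := H) c γ δ).Adj v w₁) (h2 : (CG (H := H) c γ δ).Adj v w₂)
    (h3 : (CG (H := H) c γ δ).Adj v w₃) : w₁ = w₂ ∨ w₁ = w₃ ∨ w₂ = w₃ := by
  have key : ∀ wa wb : V, (CG (H := H) c γ δ).Adj v wa → (CG (H := H) c γ δ).Adj v wb →
      c s(v, wa) = c s(v, wb) → wa = wb := by
    intro wa wb ha hb hcc
    exact Sym2.congr_right.mp (color_unique hc ha.1 hb.1 (Sym2.mem_mk_left v wa)
      (Sym2.mem_mk_left v wb) hcc)
  rcases h1.2 with e1 | e1 <;> rcases h2.2 with e2 | e2 <;> rcases h3.2 with e3 | e3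
  · exact Or.inl (key _ _ h1 h2 (by omega))
  · exact Or.inl (key _ _ h1 h2 (by omega))
  · exact Or.inr (Or.inl (key _ _ h1 h3 (by omega)))
  · exact Or.inr (Or.inr (key _ _ h2 h3 (by omega)))
  · exact Or.inr (Or.inr (key _ _ h2 h3 (by omega)))
  · exact Or.inr (Or.inl (key _ _ h1 h3 (by omega)))
  · exact Or.inl (key _ _ h1 h2 (by omega))
  · exact Or.inl (key _ _ h1 h2 (by omega))


section Walks
variable {K : SimpleGraph V}

lemma core (htwo : ∀ v w₁ w₂ w₃ : V, K.Adj v w₁ → K.Adj v w₂ → K.Adj v w₃ →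
      w₁ = w₂ ∨ w₁ = w₃ ∨ w₂ = w₃) :
    ∀ {z v w u : V} (p : K.Walk z v) (q : K.Walk z w), p.IsPath → q.IsPath →
      K.Adj z u → u ∉ p.support → u ∉ q.support → v ∈ q.support ∨ w ∈ p.support := by
  intro z v w u p
  induction p generalizing w u with
  | nil => intro q _ _ _ _ _; exact Or.inl q.start_mem_support
  | cons h p₁ ih =>
    rename_i z z₁ v'
    intro q hp hq hadj hup huq
    cases q with
    | nil => exact Or.inr (SimpleGraph.Walk.start_mem_support _)
    | cons h' q₁ =>
      rename_i z₂
      have hz12 : z₁ = z₂ := by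
        rcases htwo z u z₁ z₂ hadj h h' with h0 | h0 | h0
        · exact absurd h0.symm (by intro hh; exact hup (hh ▸ by simp))
        · exact absurd h0.symm (by intro hh; exact huq (hh ▸ by simp))
        · exact h0
      subst hz12
      have hp1 : p₁.IsPath := ((SimpleGraph.Walk.cons_isPath_iff _ _).mp hp).1
      have hq1 : q₁.IsPath := ((SimpleGraph.Walk.cons_isPath_iff _ _).mp hq).1
      have hzp : z ∉ p₁.support := ((SimpleGraph.Walk.cons_isPath_iff _ _).mp hp).2
      have hzq : z ∉ q₁.support := ((SimpleGraph.Walk.cons_isPath_iff _ _).mp hq).2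
      rcases ih q₁ hp1 hq1 h.symm hzp hzq with h0 | h0
      · exact Or.inl (by simp [h0])
      · exact Or.inr (by simp [h0])

/-- an interior vertex of a path with a unique-neighbor property yields a contradiction -/
lemma interior {s t m : V} {r : K.Walk s t} (hr : r.IsPath) (hm : m ∈ r.support)
    (hms : m ≠ s) (hmt : m ≠ t)
    (huniq : ∀ w z : V, K.Adj m w → K.Adj m z → w = z) : False := by
  classical
  have hspec := r.take_spec hm
  have htkp : (r.takeUntil m hm).IsPath := hr.takeUntil hm
  have hdrp : (r.dropUntil m hm).IsPath := hr.dropUntil hm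
  -- next vertex
  have hdrnn : ¬ (r.dropUntil m hm).Nil := SimpleGraph.Walk.not_nil_of_ne hmt
  obtain ⟨nx, hnx, d', hd'⟩ := SimpleGraph.Walk.not_nil_iff.mp hdrnn
  -- previous vertex, from the reversed take
  have htknn : ¬ (r.takeUntil m hm).reverse.Nil := SimpleGraph.Walk.not_nil_of_ne hms
  obtain ⟨pv, hpv, t', ht'⟩ := SimpleGraph.Walk.not_nil_iff.mp htknn
  have hpvmem : pv ∈ (r.takeUntil m hm).support := by
    have : pv ∈ (r.takeUntil m hm).reverse.support := by
      rw [ht']; simp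
    rwa [SimpleGraph.Walk.support_reverse, List.mem_reverse] at this
  have hnxmem : nx ∈ (r.dropUntil m hm).support.tail := by
    rw [hd']; simp
  have hnodup : (r.support).Nodup := hr.support_nodup
  have hsupp : r.support = (r.takeUntil m hm).support ++ (r.dropUntil m hm).support.tail := by
    conv_lhs => rw [← hspec]
    exact SimpleGraph.Walk.support_append _ _
  rw [hsupp] at hnodup
  have hdisj := List.disjoint_of_nodup_append hnodup
  have : pv = nx := huniq pv nx hpv hnx
  exact hdisj hpvmem (this ▸ hnxmem)


/-- three "leaves" cannot lie in one component of a max-degree-2 graph -/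
lemma three_leaves (htwo : ∀ v w₁ w₂ w₃ : V, K.Adj v w₁ → K.Adj v w₂ → K.Adj v w₃ →
      w₁ = w₂ ∨ w₁ = w₃ ∨ w₂ = w₃)
    {u₁ u₂ u₃ : V}
    (hu₁ : ∀ w z : V, K.Adj u₁ w → K.Adj u₁ z → w = z)
    (hu₂ : ∀ w z : V, K.Adj u₂ w → K.Adj u₂ z → w = z)
    (hu₃ : ∀ w z : V, K.Adj u₃ w → K.Adj u₃ z → w = z)
    (h12 : u₁ ≠ u₂) (h13 : u₁ ≠ u₃) (h23 : u₂ ≠ u₃)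
    (hr2 : K.Reachable u₁ u₂) (hr3 : K.Reachable u₁ u₃) : False := by
  classical
  obtain ⟨p0⟩ := hr2
  obtain ⟨q0⟩ := hr3
  set p : K.Walk u₁ u₂ := (p0.toPath : K.Path u₁ u₂).1 with hpdef
  set q : K.Walk u₁ u₃ := (q0.toPath : K.Path u₁ u₃).1 with hqdef
  have hp : p.IsPath := p0.toPath.2
  have hq : q.IsPath := q0.toPath.2
  have hpnn : ¬ p.Nil := SimpleGraph.Walk.not_nil_of_ne h12
  have hqnn : ¬ q.Nil := SimpleGraph.Walk.not_nil_of_ne h13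
  obtain ⟨z₁, hz₁, p₁, hp₁⟩ := SimpleGraph.Walk.not_nil_iff.mp hpnn
  obtain ⟨z₂, hz₂, q₁, hq₁⟩ := SimpleGraph.Walk.not_nil_iff.mp hqnn
  have hz12 : z₁ = z₂ := hu₁ z₁ z₂ hz₁ hz₂
  subst hz12
  rw [hp₁] at hp; rw [hq₁] at hq
  have hp1 : p₁.IsPath := ((SimpleGraph.Walk.cons_isPath_iff _ _).mp hp).1
  have hq1 : q₁.IsPath := ((SimpleGraph.Walk.cons_isPath_iff _ _).mp hq).1
  have hup : u₁ ∉ p₁.support := ((SimpleGraph.Walk.cons_isPath_iff _ _).mp hp).2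
  have huq : u₁ ∉ q₁.support := ((SimpleGraph.Walk.cons_isPath_iff _ _).mp hq).2
  rcases core htwo p₁ q₁ hp1 hq1 hz₁.symm hup huq with h0 | h0
  · -- u₂ ∈ q₁.support, so u₂ is interior on q (path u₁ → u₃)
    have hmem : u₂ ∈ (SimpleGraph.Walk.cons hz₂ q₁).support := by simp [h0]
    exact interior hq hmem h12.symm h23 hu₂
  · have hmem : u₃ ∈ (SimpleGraph.Walk.cons hz₁ p₁).support := by simp [h0]
    exact interior hp hmem h13.symm (fun h => h23 h.symm) hu₃


end Walks

end EC

set_option linter.unusedSectionVars false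
set_option maxHeartbeats 1000000

namespace EC
open SimpleGraph Finset
open scoped Classical

variable {V : Type*} [Fintype V] [DecidableEq V] {H : SimpleGraph V} [DecidableRel H.Adj] {Δ : ℕ}

lemma reach_closed {K : SimpleGraph V} {S : Set V}
    (hS : ∀ u ∈ S, ∀ w, K.Adj u w → w ∈ S) :
    ∀ {u w : V}, (p : K.Walk u w) → u ∈ S → w ∈ S := by
  intro u w p
  induction p with
  | nil => exact id
  | cons h q ih => intro hu; exact ih (hS _ hu _ h)

section Main

variable {a b : V}
  (hnoext : ∀ c, IsEdgeColoring H Δ c → ∀ α, α ∈ Mi H Δ c a → α ∈ Mi H Δ c b → False)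
  (hab : a ≠ b)
  (hpart : ∀ c, IsEdgeColoring H Δ c → ∀ α, 1 ≤ α → α ≤ Δ →
      α ∈ Mi H Δ c a ∨ α ∈ Mi H Δ c b)

include hnoext

lemma pair_ne {c : Sym2 V → ℕ} (hc : IsEdgeColoring H Δ c) {γ δ : ℕ}
    (hγ : γ ∈ Mi H Δ c a) (hδ : δ ∈ Mi H Δ c b) : γ ≠ δ := by
  intro h
  exact hnoext c hc γ hγ (h ▸ hδ)

lemma linked {c : Sym2 V → ℕ} (hc : IsEdgeColoring H Δ c) {γ δ : ℕ}
    (hγ : γ ∈ Mi H Δ c a) (hδ : δ ∈ Mi H Δ c b) :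
    (CG (H := H) c γ δ).Reachable a b := by
  by_contra hreach
  set R : Set V := {v | (CG (H := H) c γ δ).Reachable a v} with hR
  have hcl : Closed (H := H) c γ δ R := by
    intro u w hu hadj hpair
    exact hu.trans (SimpleGraph.Adj.reachable ⟨hadj, hpair⟩)
  have haR : a ∈ R := SimpleGraph.Reachable.refl a
  have hbR : b ∉ R := hreach
  have hne : γ ≠ δ := pair_ne hnoext hc hγ hδ
  have hγb : (1 ≤ γ ∧ γ ≤ Δ) := (mem_Mi.mp hγ).1
  have hδb : (1 ≤ δ ∧ δ ≤ Δ) := (mem_Mi.mp hδ).1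
  have hc' := swap_proper (R := R) hc hγb hδb hcl
  have h1 : δ ∈ Mi H Δ (swapC c γ δ R) a := (Mi_swap_delta hne haR hγb hδb).mpr hγ
  have h2 : δ ∈ Mi H Δ (swapC c γ δ R) b := by
    rw [Mi_swap_not_mem hcl hbR]; exact hδ
  exact hnoext _ hc' δ h1 h2

/-- x (missing a chain color) cannot be on the a-b chain -/
lemma x_not_linked {c : Sym2 V → ℕ} (hc : IsEdgeColoring H Δ c) {γ δ : ℕ}
    (hγ : γ ∈ Mi H Δ c a) (hδ : δ ∈ Mi H Δ c b) {x : V} (hxa : x ≠ a) (hxb : x ≠ b)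
    (hx : γ ∈ Mi H Δ c x ∨ δ ∈ Mi H Δ c x) :
    ¬ (CG (H := H) c γ δ).Reachable a x := by
  intro hrx
  have hab' : a ≠ b := by
    intro h; exact hnoext c hc γ hγ (h ▸ hγ)
  exact three_leaves (fun v w1 w2 w3 => cg_two_nbrs hc)
    (fun w z => cg_unique_nbr hc (Or.inl hγ)) (fun w z => cg_unique_nbr hc (Or.inr hδ))
    (fun w z => cg_unique_nbr hc hx) hab' hxa.symm hxb.symm
    (linked hnoext hc hγ hδ) hrx

/-- swap the chain component of `x` (which avoids `a` and `b`) -/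
lemma swapX {c : Sym2 V → ℕ} (hc : IsEdgeColoring H Δ c) {γ δ : ℕ}
    (hγ : γ ∈ Mi H Δ c a) (hδ : δ ∈ Mi H Δ c b) {x : V} (hxa : x ≠ a) (hxb : x ≠ b)
    (hx : γ ∈ Mi H Δ c x ∨ δ ∈ Mi H Δ c x) :
    ∃ c', IsEdgeColoring H Δ c' ∧
      Mi H Δ c' a = Mi H Δ c a ∧ Mi H Δ c' b = Mi H Δ c b ∧
      (∀ e ∈ H.edgeSet, a ∈ e → c' e = c e) ∧ (∀ e ∈ H.edgeSet, b ∈ e → c' e = c e) ∧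
      (γ ∈ Mi H Δ c' x ↔ δ ∈ Mi H Δ c x) ∧ (δ ∈ Mi H Δ c' x ↔ γ ∈ Mi H Δ c x) ∧
      (∀ α, α ≠ γ → α ≠ δ → (α ∈ Mi H Δ c' x ↔ α ∈ Mi H Δ c x)) ∧
      (∀ e, c e ≠ γ → c e ≠ δ → c' e = c e) ∧
      (∀ e, x ∈ e → c e = γ → c' e = δ) ∧ (∀ e, x ∈ e → c e = δ → c' e = γ) := by
  have hne : γ ≠ δ := pair_ne hnoext hc hγ hδ
  have hγb : (1 ≤ γ ∧ γ ≤ Δ) := (mem_Mi.mp hγ).1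
  have hδb : (1 ≤ δ ∧ δ ≤ Δ) := (mem_Mi.mp hδ).1
  set R : Set V := {v | (CG (H := H) c γ δ).Reachable x v} with hR
  have hcl : Closed (H := H) c γ δ R := by
    intro u w hu hadj hpair
    exact hu.trans (SimpleGraph.Adj.reachable ⟨hadj, hpair⟩)
  have hxR : x ∈ R := SimpleGraph.Reachable.refl x
  have haR : a ∉ R := by
    intro hmem
    exact x_not_linked hnoext hc hγ hδ hxa hxb hx (SimpleGraph.Reachable.symm hmem)
  have hbR : b ∉ R := by
    intro hmem
    have hrab := linked hnoext hc hγ hδ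
    exact x_not_linked hnoext hc hγ hδ hxa hxb hx
      (hrab.trans (SimpleGraph.Reachable.symm hmem))
  refine ⟨swapC c γ δ R, swap_proper hc hγb hδb hcl, Mi_swap_not_mem hcl haR,
    Mi_swap_not_mem hcl hbR, fun e he hae => swap_edge_not_mem hcl he hae haR,
    fun e he hbe => swap_edge_not_mem hcl he hbe hbR,
    Mi_swap_gamma hne hxR hγb hδb, Mi_swap_delta hne hxR hγb hδb,
    fun α h1 h2 => Mi_swap_other h1 h2,
    fun e h1 h2 => swap_not_pair e h1 h2,
    fun e hxe hce => swap_gamma hxe hxR hce, fun e hxe hce => swap_delta hne hxe hxR hce⟩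

/-- swap the chain component containing both `a` and `b` (avoiding `x`) -/
lemma swapAB {c : Sym2 V → ℕ} (hc : IsEdgeColoring H Δ c) {γ δ : ℕ}
    (hγ : γ ∈ Mi H Δ c a) (hδ : δ ∈ Mi H Δ c b) {x : V} (hxa : x ≠ a) (hxb : x ≠ b)
    (hx : γ ∈ Mi H Δ c x ∨ δ ∈ Mi H Δ c x) :
    ∃ c', IsEdgeColoring H Δ c' ∧
      Mi H Δ c' x = Mi H Δ c x ∧
      (∀ e ∈ H.edgeSet, x ∈ e → c' e = c e) ∧
      (γ ∈ Mi H Δ c' a ↔ δ ∈ Mi H Δ c a) ∧ (δ ∈ Mi H Δ c' a ↔ γ ∈ Mi H Δ c a) ∧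
      (∀ α, α ≠ γ → α ≠ δ → (α ∈ Mi H Δ c' a ↔ α ∈ Mi H Δ c a)) ∧
      (γ ∈ Mi H Δ c' b ↔ δ ∈ Mi H Δ c b) ∧ (δ ∈ Mi H Δ c' b ↔ γ ∈ Mi H Δ c b) ∧
      (∀ α, α ≠ γ → α ≠ δ → (α ∈ Mi H Δ c' b ↔ α ∈ Mi H Δ c b)) ∧
      (∀ e, c e ≠ γ → c e ≠ δ → c' e = c e) := by
  have hne : γ ≠ δ := pair_ne hnoext hc hγ hδ
  have hγb : (1 ≤ γ ∧ γ ≤ Δ) := (mem_Mi.mp hγ).1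
  have hδb : (1 ≤ δ ∧ δ ≤ Δ) := (mem_Mi.mp hδ).1
  set R : Set V := {v | (CG (H := H) c γ δ).Reachable a v} with hR
  have hcl : Closed (H := H) c γ δ R := by
    intro u w hu hadj hpair
    exact hu.trans (SimpleGraph.Adj.reachable ⟨hadj, hpair⟩)
  have haR : a ∈ R := SimpleGraph.Reachable.refl a
  have hbR : b ∈ R := linked hnoext hc hγ hδ
  have hxR : x ∉ R := x_not_linked hnoext hc hγ hδ hxa hxb hx
  refine ⟨swapC c γ δ R, swap_proper hc hγb hδb hcl, Mi_swap_not_mem hcl hxR,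
    fun e he hxe => swap_edge_not_mem hcl he hxe hxR,
    Mi_swap_gamma hne haR hγb hδb, Mi_swap_delta hne haR hγb hδb,
    fun α h1 h2 => Mi_swap_other h1 h2,
    Mi_swap_gamma hne hbR hγb hδb, Mi_swap_delta hne hbR hγb hδb,
    fun α h1 h2 => Mi_swap_other h1 h2,
    fun e h1 h2 => swap_not_pair e h1 h2⟩

include hab hpart in
/-- the final contradiction pattern: `c(xy)` missing at `b` and `c(by)` missing at `x` -/
lemma patternF {c : Sym2 V → ℕ} (hc : IsEdgeColoring H Δ c) {x y : V}
    (hya : y ≠ a) (hyb : y ≠ b) (hxa : x ≠ a) (hxb : x ≠ b)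
    (hxy : H.Adj x y) (hby : H.Adj b y)
    (hθ : c s(x, y) ∈ Mi H Δ c b) (hβ : c s(b, y) ∈ Mi H Δ c x) : False := by
  have hexy : s(x, y) ∈ H.edgeSet := hxy
  have heby : s(b, y) ∈ H.edgeSet := hby
  set θ := c s(x, y) with hθdef
  set β := c s(b, y) with hβdef
  have hβbnd : 1 ≤ β ∧ β ≤ Δ := hc.1 _ heby
  have hβnb : β ∉ Mi H Δ c b := by
    intro hmem
    exact (mem_Mi.mp hmem).2 _ heby (Sym2.mem_mk_left b y) rfl
  have hβa : β ∈ Mi H Δ c a := by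
    rcases hpart c hc β hβbnd.1 hβbnd.2 with h | h
    · exact h
    · exact absurd h hβnb
  -- the closure set
  have hS : ∀ u ∈ ({b, y, x} : Set V), ∀ w, (CG (H := H) c β θ).Adj u w →
      w ∈ ({b, y, x} : Set V) := by
    rintro u hu w ⟨hadj, hcol⟩
    simp only [Set.mem_insert_iff, Set.mem_singleton_iff] at hu ⊢
    rcases hu with rfl | rfl | rfl
    · -- u = b
      rcases hcol with h | h
      · have := color_unique hc hadj heby (Sym2.mem_mk_left _ _) (Sym2.mem_mk_left _ _)
          (by rw [h])
        exact Or.inr (Or.inl (Sym2.congr_right.mp this))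
      · exact (((mem_Mi.mp hθ).2 _ hadj (Sym2.mem_mk_left _ _)) h).elim
    · -- u = y
      rcases hcol with h | h
      · have h2 := color_unique hc hadj heby (Sym2.mem_mk_left _ _) (Sym2.mem_mk_right b u)
          (by rw [h])
        have h3 : s(u, w) = s(u, b) := by rw [h2, Sym2.eq_swap]
        exact Or.inl (Sym2.congr_right.mp h3)
      · have h2 := color_unique hc hadj hexy (Sym2.mem_mk_left _ _) (Sym2.mem_mk_right x u)
          (by rw [h])
        have h3 : s(u, w) = s(u, x) := by rw [h2, Sym2.eq_swap]
        exact Or.inr (Or.inr (Sym2.congr_right.mp h3))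
    · -- u = x
      rcases hcol with h | h
      · exact (((mem_Mi.mp hβ).2 _ hadj (Sym2.mem_mk_left _ _)) h).elim
      · have h2 := color_unique hc hadj hexy (Sym2.mem_mk_left _ _) (Sym2.mem_mk_left u y)
          (by rw [h])
        exact Or.inr (Or.inl (Sym2.congr_right.mp h2))
  have hreach := (linked hnoext hc hβa hθ).symm
  obtain ⟨p⟩ := hreach
  have : a ∈ ({b, y, x} : Set V) := reach_closed hS p (by simp)
  simp only [Set.mem_insert_iff, Set.mem_singleton_iff] at this
  rcases this with h | h | h
  · exact hab h
  · exact hya h.symm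
  · exact hxa h.symm

include hab hpart in
/-- recoloring `by` with a color missing at both `b` and `y` gives a contradiction -/
lemma recolorBY {c : Sym2 V → ℕ} (hc : IsEdgeColoring H Δ c) {y : V} (hby : H.Adj b y)
    (hya : y ≠ a) {γ : ℕ} (hγb : γ ∈ Mi H Δ c b) (hγy : γ ∈ Mi H Δ c y) : False := by
  have heby : s(b, y) ∈ H.edgeSet := hby
  set β := c s(b, y) with hβdef
  have hβbnd : 1 ≤ β ∧ β ≤ Δ := hc.1 _ heby
  have hβnb : β ∉ Mi H Δ c b := fun hmem =>
    (mem_Mi.mp hmem).2 _ heby (Sym2.mem_mk_left b y) rfl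
  have hβa : β ∈ Mi H Δ c a := by
    rcases hpart c hc β hβbnd.1 hβbnd.2 with h | h
    · exact h
    · exact absurd h hβnb
  have hγβ : γ ≠ β := fun h => hβnb (h ▸ hγb)
  set c₂ : Sym2 V → ℕ := fun e => if e = s(b, y) then γ else c e with hc₂
  have hc₂by : c₂ s(b, y) = γ := by simp [hc₂]
  have hc₂other : ∀ e, e ≠ s(b, y) → c₂ e = c e := by
    intro e he; simp [hc₂, he]
  have hprop : IsEdgeColoring H Δ c₂ := by
    constructor
    · intro e he
      by_cases h : e = s(b, y)
      · rw [h, hc₂by]; exact (mem_Mi.mp hγb).1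
      · rw [hc₂other e h]; exact hc.1 e he
    · intro e he f hf hef ⟨v, hve, hvf⟩
      by_cases h1 : e = s(b, y) <;> by_cases h2 : f = s(b, y)
      · exact absurd (h1.trans h2.symm) hef
      · rw [h1, hc₂by, hc₂other f h2]
        intro hcon
        subst h1
        rw [Sym2.mem_iff] at hve
        rcases hve with rfl | rfl
        · exact (mem_Mi.mp hγb).2 f hf hvf hcon.symm
        · exact (mem_Mi.mp hγy).2 f hf hvf hcon.symm
      · rw [h2, hc₂by, hc₂other e h1]
        intro hcon
        subst h2
        rw [Sym2.mem_iff] at hvf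
        rcases hvf with rfl | rfl
        · exact (mem_Mi.mp hγb).2 e he hve hcon
        · exact (mem_Mi.mp hγy).2 e he hve hcon
      · rw [hc₂other e h1, hc₂other f h2]
        exact hc.2 e he f hf hef ⟨v, hve, hvf⟩
  apply hnoext c₂ hprop β
  · rw [mem_Mi]
    refine ⟨hβbnd, fun e he hae => ?_⟩
    have hne : e ≠ s(b, y) := by
      intro h
      subst h
      rw [Sym2.mem_iff] at hae
      rcases hae with rfl | rfl
      · exact hab rfl
      · exact hya rfl
    rw [hc₂other e hne]
    exact (mem_Mi.mp hβa).2 e he hae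
  · rw [mem_Mi]
    refine ⟨hβbnd, fun e he hbe => ?_⟩
    by_cases hne : e = s(b, y)
    · rw [hne, hc₂by]; exact hγβ
    · rw [hc₂other e hne]
      intro hcon
      exact hne (color_unique hc he heby hbe (Sym2.mem_mk_left b y) hcon)

include hab hpart in
/-- Vizing-adjacency-type lemma: neighbors of `b` other than `a` have no missing colors -/
lemma lemA {c : Sym2 V → ℕ} (hc : IsEdgeColoring H Δ c) {y : V} (hby : H.Adj b y)
    (hya : y ≠ a) (hMb : (Mi H Δ c b).Nonempty) (hmy : (Mi H Δ c y).Nonempty) : False := by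
  obtain ⟨γ, hγ⟩ := hmy
  have hγbnd := (mem_Mi.mp hγ).1
  rcases hpart c hc γ hγbnd.1 hγbnd.2 with hγa | hγb
  · obtain ⟨δ, hδ⟩ := hMb
    obtain ⟨c', hc', hMa', hMb', hea', heb', hg', hd', ho', hnp', hgc', hdc'⟩ :=
      swapX hnoext hc hγa hδ hya hby.ne' (Or.inl hγ)
    · apply recolorBY hnoext hab hpart hc' hby hya (γ := δ)
      · rw [hMb']; exact hδ
      · exact hd'.mpr hγ
  · exact recolorBY hnoext hab hpart hc hby hya hγb hγ

section XY

variable {x y : V} (hya : y ≠ a) (hyb : y ≠ b) (hxa : x ≠ a) (hxb : x ≠ b)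
  (hxy : H.Adj x y) (hby : H.Adj b y)

include hnoext hab hpart hya hyb hxa hxb hxy hby

lemma lemA2' {c : Sym2 V → ℕ} (hc : IsEdgeColoring H Δ c)
    (hθ : c s(x, y) ∈ Mi H Δ c b) {μ : ℕ} (hμb : μ ∈ Mi H Δ c b)
    (hμx : μ ∈ Mi H Δ c x) : False := by
  have hexy : s(x, y) ∈ H.edgeSet := hxy
  have heby : s(b, y) ∈ H.edgeSet := hby
  set θ := c s(x, y) with hθdef
  set β := c s(b, y) with hβdef
  have hβbnd : 1 ≤ β ∧ β ≤ Δ := hc.1 _ heby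
  have hβnb : β ∉ Mi H Δ c b := fun hmem =>
    (mem_Mi.mp hmem).2 _ heby (Sym2.mem_mk_left b y) rfl
  have hβa : β ∈ Mi H Δ c a := by
    rcases hpart c hc β hβbnd.1 hβbnd.2 with h | h
    · exact h
    · exact absurd h hβnb
  have hθβ : θ ≠ β := fun h => hβnb (h ▸ hθ)
  have hθx : θ ∉ Mi H Δ c x := fun hmem =>
    (mem_Mi.mp hmem).2 _ hexy (Sym2.mem_mk_left x y) rfl
  have hθμ : θ ≠ μ := fun h => hθx (h ▸ hμx)
  obtain ⟨c', hc', hMa', hMb', hea', heb', hg', hd', ho', hnp', hgc', hdc'⟩ :=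
    swapX hnoext hc hβa hμb hxa hxb (Or.inr hμx)
  apply patternF hnoext hab hpart hc' hya hyb hxa hxb hxy hby
  · rw [hnp' s(x, y) hθβ hθμ, hMb']; exact hθ
  · rw [heb' s(b, y) heby (Sym2.mem_mk_left b y)]
    exact hg'.mpr hμx

lemma lemA2 {c : Sym2 V → ℕ} (hc : IsEdgeColoring H Δ c)
    (hθ : c s(x, y) ∈ Mi H Δ c b) {μ : ℕ} (hμx : μ ∈ Mi H Δ c x)
    (h2b : 2 ≤ (Mi H Δ c b).card) : False := by
  have hexy : s(x, y) ∈ H.edgeSet := hxy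
  have heby : s(b, y) ∈ H.edgeSet := hby
  set θ := c s(x, y) with hθdef
  set β := c s(b, y) with hβdef
  have hβbnd : 1 ≤ β ∧ β ≤ Δ := hc.1 _ heby
  have hβnb : β ∉ Mi H Δ c b := fun hmem =>
    (mem_Mi.mp hmem).2 _ heby (Sym2.mem_mk_left b y) rfl
  have hμbnd := (mem_Mi.mp hμx).1
  have hθx : θ ∉ Mi H Δ c x := fun hmem =>
    (mem_Mi.mp hmem).2 _ hexy (Sym2.mem_mk_left x y) rfl
  by_cases hμβ : μ = β
  · exact patternF hnoext hab hpart hc hya hyb hxa hxb hxy hby hθ (by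
      rw [← hβdef, ← hμβ]; exact hμx)
  by_cases hμb : μ ∈ Mi H Δ c b
  · exact lemA2' hnoext hab hpart hya hyb hxa hxb hxy hby hc hθ hμb hμx
  have hμa : μ ∈ Mi H Δ c a := by
    rcases hpart c hc μ hμbnd.1 hμbnd.2 with h | h
    · exact h
    · exact absurd h hμb
  obtain ⟨δ, hδmem, hδθ⟩ := Finset.exists_mem_ne (show 1 < (Mi H Δ c b).card by omega) θ
  have hθμ : θ ≠ μ := fun h => hθx (h ▸ hμx)
  obtain ⟨c', hc', hMa', hMb', hea', heb', hg', hd', ho', hnp', hgc', hdc'⟩ :=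
    swapX hnoext hc hμa hδmem hxa hxb (Or.inl hμx)
  apply lemA2' hnoext hab hpart hya hyb hxa hxb hxy hby hc'
    (μ := δ)
  · rw [hnp' s(x, y) hθμ (fun h => hδθ h.symm), hMb']; exact hθ
  · rw [hMb']; exact hδmem
  · exact hd'.mpr hμx

lemma lemB1 {c : Sym2 V → ℕ} (hc : IsEdgeColoring H Δ c)
    (hθa : c s(x, y) ∈ Mi H Δ c a) {μ : ℕ} (hμb : μ ∈ Mi H Δ c b)
    (hμx : μ ∈ Mi H Δ c x) (h2b : 2 ≤ (Mi H Δ c b).card) : False := by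
  have hexy : s(x, y) ∈ H.edgeSet := hxy
  set θ := c s(x, y) with hθdef
  obtain ⟨c', hc', hMa', hMb', hea', heb', hg', hd', ho', hnp', hgc', hdc'⟩ :=
    swapX hnoext hc hθa hμb hxa hxb (Or.inr hμx)
  have hxyc' : c' s(x, y) = μ := hgc' s(x, y) (Sym2.mem_mk_left x y) rfl
  apply lemA2 hnoext hab hpart hya hyb hxa hxb hxy hby hc' (μ := θ)
  · rw [hxyc', hMb']; exact hμb
  · exact hg'.mpr hμx
  · rw [hMb']; exact h2b

lemma lemP2 {c : Sym2 V → ℕ} (hc : IsEdgeColoring H Δ c)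
    (hmx : (Mi H Δ c x).Nonempty) (h2b : 2 ≤ (Mi H Δ c b).card) : False := by
  obtain ⟨μ, hμx⟩ := hmx
  have hexy : s(x, y) ∈ H.edgeSet := hxy
  set θ := c s(x, y) with hθdef
  have hθbnd : 1 ≤ θ ∧ θ ≤ Δ := hc.1 _ hexy
  have hμbnd := (mem_Mi.mp hμx).1
  have hθx : θ ∉ Mi H Δ c x := fun hmem =>
    (mem_Mi.mp hmem).2 _ hexy (Sym2.mem_mk_left x y) rfl
  have hθμ : θ ≠ μ := fun h => hθx (h ▸ hμx)
  rcases hpart c hc θ hθbnd.1 hθbnd.2 with hθa | hθb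
  · rcases hpart c hc μ hμbnd.1 hμbnd.2 with hμa | hμb
    · obtain ⟨δ, hδmem⟩ := Finset.card_pos.mp (show 0 < (Mi H Δ c b).card by omega)
      have hθδ : θ ≠ δ := pair_ne hnoext hc hθa hδmem
      obtain ⟨c', hc', hMa', hMb', hea', heb', hg', hd', ho', hnp', hgc', hdc'⟩ :=
        swapX hnoext hc hμa hδmem hxa hxb (Or.inl hμx)
      apply lemB1 hnoext hab hpart hya hyb hxa hxb hxy hby hc' (μ := δ)
      · rw [hnp' s(x, y) hθμ hθδ, hMa']; exact hθa
      · rw [hMb']; exact hδmem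
      · exact hd'.mpr hμx
      · rw [hMb']; exact h2b
    · exact lemB1 hnoext hab hpart hya hyb hxa hxb hxy hby hc hθa hμb hμx h2b
  · exact lemA2 hnoext hab hpart hya hyb hxa hxb hxy hby hc hθb hμx h2b

lemma lemS1 {c : Sym2 V → ℕ} (hc : IsEdgeColoring H Δ c)
    (hθb : c s(x, y) ∈ Mi H Δ c b) {p q : ℕ} (hp : p ∈ Mi H Δ c x)
    (hq : q ∈ Mi H Δ c x) (hpq : p ≠ q) : False := by
  have hexy : s(x, y) ∈ H.edgeSet := hxy
  have heby : s(b, y) ∈ H.edgeSet := hby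
  set θ := c s(x, y) with hθdef
  set β := c s(b, y) with hβdef
  have hβbnd : 1 ≤ β ∧ β ≤ Δ := hc.1 _ heby
  have hβnb : β ∉ Mi H Δ c b := fun hmem =>
    (mem_Mi.mp hmem).2 _ heby (Sym2.mem_mk_left b y) rfl
  have hβa : β ∈ Mi H Δ c a := by
    rcases hpart c hc β hβbnd.1 hβbnd.2 with h | h
    · exact h
    · exact absurd h hβnb
  have hθβ : θ ≠ β := fun h => hβnb (h ▸ hθb)
  have hθx : θ ∉ Mi H Δ c x := fun hmem =>
    (mem_Mi.mp hmem).2 _ hexy (Sym2.mem_mk_left x y) rfl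
  have hθp : θ ≠ p := fun h => hθx (h ▸ hp)
  have hθq : θ ≠ q := fun h => hθx (h ▸ hq)
  by_cases hpβ : p = β
  · exact patternF hnoext hab hpart hc hya hyb hxa hxb hxy hby hθb (by rw [hpβ] at hp; exact hp)
  by_cases hqβ : q = β
  · exact patternF hnoext hab hpart hc hya hyb hxa hxb hxy hby hθb (by rw [hqβ] at hq; exact hq)
  by_cases hpb : p ∈ Mi H Δ c b
  · exact lemA2' hnoext hab hpart hya hyb hxa hxb hxy hby hc hθb hpb hp
  by_cases hqb : q ∈ Mi H Δ c b
  · exact lemA2' hnoext hab hpart hya hyb hxa hxb hxy hby hc hθb hqb hq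
  have hpa : p ∈ Mi H Δ c a := by
    rcases hpart c hc p (mem_Mi.mp hp).1.1 (mem_Mi.mp hp).1.2 with h | h
    · exact h
    · exact absurd h hpb
  have hqa : q ∈ Mi H Δ c a := by
    rcases hpart c hc q (mem_Mi.mp hq).1.1 (mem_Mi.mp hq).1.2 with h | h
    · exact h
    · exact absurd h hqb
  -- Move 1: swap the (p, θ) chain containing a and b
  obtain ⟨c₁, hc₁, hMx₁, hex₁, hga₁, hda₁, hoa₁, hgb₁, hdb₁, hob₁, hnp₁⟩ :=
    swapAB hnoext hc hpa hθb hxa hxb (Or.inl hp)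
  have hxy₁ : c₁ s(x, y) = θ := hex₁ s(x, y) hexy (Sym2.mem_mk_left x y)
  have hby₁ : c₁ s(b, y) = β := hnp₁ s(b, y) (fun h => hpβ h.symm) (fun h => hθβ h.symm)
  have hθa₁ : θ ∈ Mi H Δ c₁ a := hda₁.mpr hpa
  have hpb₁ : p ∈ Mi H Δ c₁ b := hgb₁.mpr hθb
  have hqa₁ : q ∈ Mi H Δ c₁ a := (hoa₁ q (fun h => hpq h.symm) hθq.symm).mpr hqa
  have hβa₁ : β ∈ Mi H Δ c₁ a := (hoa₁ β (fun h => hpβ h.symm) (fun h => hθβ h.symm)).mpr hβa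
  have hpx₁ : p ∈ Mi H Δ c₁ x := by rw [hMx₁]; exact hp
  have hqx₁ : q ∈ Mi H Δ c₁ x := by rw [hMx₁]; exact hq
  -- Move 2: swap (β, p) chain at x
  obtain ⟨c₂, hc₂, hMa₂, hMb₂, hea₂, heb₂, hg₂, hd₂, ho₂, hnp₂, hgc₂, hdc₂⟩ :=
    swapX hnoext hc₁ hβa₁ hpb₁ hxa hxb (Or.inr hpx₁)
  have hxy₂ : c₂ s(x, y) = θ := by
    rw [hnp₂ s(x, y) (by rw [hxy₁]; exact hθβ) (by rw [hxy₁]; exact hθp), hxy₁]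
  have hby₂ : c₂ s(b, y) = β := by
    rw [heb₂ s(b, y) heby (Sym2.mem_mk_left b y), hby₁]
  have hβx₂ : β ∈ Mi H Δ c₂ x := hg₂.mpr hpx₁
  have hqx₂ : q ∈ Mi H Δ c₂ x := (ho₂ q (fun h => hqβ h) hpq.symm).mpr hqx₁
  have hθa₂ : θ ∈ Mi H Δ c₂ a := by rw [hMa₂]; exact hθa₁
  have hqa₂ : q ∈ Mi H Δ c₂ a := by rw [hMa₂]; exact hqa₁
  have hpb₂ : p ∈ Mi H Δ c₂ b := by rw [hMb₂]; exact hpb₁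
  -- Move 3: swap (q, p) chain at x
  obtain ⟨c₃, hc₃, hMa₃, hMb₃, hea₃, heb₃, hg₃, hd₃, ho₃, hnp₃, hgc₃, hdc₃⟩ :=
    swapX hnoext hc₂ hqa₂ hpb₂ hxa hxb (Or.inl hqx₂)
  have hxy₃ : c₃ s(x, y) = θ := by
    rw [hnp₃ s(x, y) (by rw [hxy₂]; exact hθq) (by rw [hxy₂]; exact hθp), hxy₂]
  have hby₃ : c₃ s(b, y) = β := by
    rw [heb₃ s(b, y) heby (Sym2.mem_mk_left b y), hby₂]
  have hpx₃ : p ∈ Mi H Δ c₃ x := hd₃.mpr hqx₂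
  have hβx₃ : β ∈ Mi H Δ c₃ x := (ho₃ β (fun h => hqβ h.symm) (fun h => hpβ h.symm)).mpr hβx₂
  have hθa₃ : θ ∈ Mi H Δ c₃ a := by rw [hMa₃]; exact hθa₂
  have hpb₃ : p ∈ Mi H Δ c₃ b := by rw [hMb₃]; exact hpb₂
  -- Move 4: swap (θ, p) chain at x (this recolors xy to p)
  obtain ⟨c₄, hc₄, hMa₄, hMb₄, hea₄, heb₄, hg₄, hd₄, ho₄, hnp₄, hgc₄, hdc₄⟩ :=
    swapX hnoext hc₃ hθa₃ hpb₃ hxa hxb (Or.inr hpx₃)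
  have hxy₄ : c₄ s(x, y) = p := hgc₄ s(x, y) (Sym2.mem_mk_left x y) hxy₃
  have hby₄ : c₄ s(b, y) = β := by
    rw [heb₄ s(b, y) heby (Sym2.mem_mk_left b y), hby₃]
  have hβx₄ : β ∈ Mi H Δ c₄ x := (ho₄ β (fun h => hθβ h.symm) (fun h => hpβ h.symm)).mpr hβx₃
  apply patternF hnoext hab hpart hc₄ hya hyb hxa hxb hxy hby
  · rw [hxy₄, hMb₄]; exact hpb₃
  · rw [hby₄]; exact hβx₄

lemma lemP1 {c : Sym2 V → ℕ} (hc : IsEdgeColoring H Δ c)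
    (hMbne : (Mi H Δ c b).Nonempty) (hx2 : 2 ≤ (Mi H Δ c x).card) : False := by
  obtain ⟨μ₁, hμ₁, μ₂, hμ₂, hμne⟩ :=
    Finset.one_lt_card.mp (show 1 < (Mi H Δ c x).card by omega)
  by_cases h2b : 2 ≤ (Mi H Δ c b).card
  · exact lemP2 hnoext hab hpart hya hyb hxa hxb hxy hby hc ⟨μ₁, hμ₁⟩ h2b
  have hexy : s(x, y) ∈ H.edgeSet := hxy
  set θ := c s(x, y) with hθdef
  have hθbnd : 1 ≤ θ ∧ θ ≤ Δ := hc.1 _ hexy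
  have hθx : θ ∉ Mi H Δ c x := fun hmem =>
    (mem_Mi.mp hmem).2 _ hexy (Sym2.mem_mk_left x y) rfl
  have hθ1 : θ ≠ μ₁ := fun h => hθx (h ▸ hμ₁)
  have hθ2 : θ ≠ μ₂ := fun h => hθx (h ▸ hμ₂)
  rcases hpart c hc θ hθbnd.1 hθbnd.2 with hθa | hθb
  · -- need to reach a configuration with c(xy) missing at b
    -- helper: from a coloring with a missing color of x being missing at b
    have key : ∀ c' : Sym2 V → ℕ, IsEdgeColoring H Δ c' → c' s(x, y) = θ →
        θ ∈ Mi H Δ c' a → ∀ ν₂ : ℕ, ν₂ ≠ θ →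
        (∃ ν₁, ν₁ ∈ Mi H Δ c' b ∧ ν₁ ∈ Mi H Δ c' x ∧ ν₁ ≠ ν₂) →
        ν₂ ∈ Mi H Δ c' x → False := by
      intro c' hc' hxy' hθa' ν₂ hν₂θ ⟨ν₁, hν₁b, hν₁x, hνne⟩ hν₂x
      obtain ⟨c'', hc'', hMa', hMb', hea', heb', hg', hd', ho', hnp', hgc', hdc'⟩ :=
        swapX hnoext hc' hθa' hν₁b hxa hxb (Or.inr hν₁x)
      have hxy'' : c'' s(x, y) = ν₁ := hgc' s(x, y) (Sym2.mem_mk_left x y) hxy'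
      apply lemS1 hnoext hab hpart hya hyb hxa hxb hxy hby hc''
        (p := θ) (q := ν₂)
      · rw [hxy'', hMb']; exact hν₁b
      · exact hg'.mpr hν₁x
      · exact (ho' ν₂ hν₂θ (fun h => hνne h.symm)).mpr hν₂x
      · exact fun h => hν₂θ h.symm
    by_cases h1 : μ₁ ∈ Mi H Δ c b
    · exact key c hc rfl hθa μ₂ hθ2.symm ⟨μ₁, h1, hμ₁, hμne⟩ hμ₂
    by_cases h2 : μ₂ ∈ Mi H Δ c b
    · exact key c hc rfl hθa μ₁ hθ1.symm ⟨μ₂, h2, hμ₂, fun h => hμne h.symm⟩ hμ₁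
    -- both μ's missing at a; swap (μ₁, ε) at x to get ε missing at x
    have hμ₁a : μ₁ ∈ Mi H Δ c a := by
      rcases hpart c hc μ₁ (mem_Mi.mp hμ₁).1.1 (mem_Mi.mp hμ₁).1.2 with h | h
      · exact h
      · exact absurd h h1
    obtain ⟨ε, hε⟩ := hMbne
    have hμ₁ε : μ₁ ≠ ε := pair_ne hnoext hc hμ₁a hε
    have hμ₂ε : μ₂ ≠ ε := by
      rcases hpart c hc μ₂ (mem_Mi.mp hμ₂).1.1 (mem_Mi.mp hμ₂).1.2 with h | h
      · exact pair_ne hnoext hc h hε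
      · exact absurd h h2
    have hθε : θ ≠ ε := pair_ne hnoext hc hθa hε
    obtain ⟨c', hc', hMa', hMb', hea', heb', hg', hd', ho', hnp', hgc', hdc'⟩ :=
      swapX hnoext hc hμ₁a hε hxa hxb (Or.inl hμ₁)
    have hxy' : c' s(x, y) = θ := hnp' s(x, y) hθ1 hθε
    apply key c' hc' hxy' (by rw [hMa']; exact hθa) μ₂ hθ2.symm
      ⟨ε, by rw [hMb']; exact hε, hd'.mpr hμ₁, fun h => hμ₂ε h.symm⟩
      ((ho' μ₂ (fun h => hμne h.symm) hμ₂ε).mpr hμ₂)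
  · exact lemS1 hnoext hab hpart hya hyb hxa hxb hxy hby hc hθb hμ₁ hμ₂ hμne

end XY
end Main
end EC

set_option linter.unusedSectionVars false
set_option maxHeartbeats 1000000

namespace EC
open SimpleGraph Finset
open scoped Classical

variable {V : Type*} [Fintype V] [DecidableEq V]

lemma exists_coloring (G : SimpleGraph V) : ∃ k c, IsEdgeColoring G k c := by
  refine ⟨Fintype.card (Sym2 V), fun e => (Fintype.equivFin (Sym2 V)) e + 1, ?_, ?_⟩
  · intro e _
    simp only []
    constructor
    · omega
    · have := ((Fintype.equivFin (Sym2 V)) e).isLt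
      omega
  · intro e _ f _ hef _
    simp only []
    intro hcon
    apply hef
    have : (Fintype.equivFin (Sym2 V)) e = (Fintype.equivFin (Sym2 V)) f := by
      apply Fin.ext; omega
    exact (Fintype.equivFin (Sym2 V)).injective this

lemma chromIndex_coloring (G : SimpleGraph V) {k : ℕ} (h : chromIndex G ≤ k) :
    ∃ c, IsEdgeColoring G k c := by
  have hne : {k | ∃ c, IsEdgeColoring G k c}.Nonempty := by
    obtain ⟨k₀, c₀, hc₀⟩ := exists_coloring G
    exact ⟨k₀, c₀, hc₀⟩
  obtain ⟨c, hc⟩ := Nat.sInf_mem hne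
  refine ⟨c, fun e he => ⟨(hc.1 e he).1, le_trans (hc.1 e he).2 h⟩, hc.2⟩

lemma no_coloring_lt (G : SimpleGraph V) {k : ℕ} (h : k < chromIndex G) :
    ¬ ∃ c, IsEdgeColoring G k c := by
  intro ⟨c, hc⟩
  have : chromIndex G ≤ k := Nat.sInf_le ⟨c, hc⟩
  omega


section Inst

variable (G : SimpleGraph V) [DecidableRel G.Adj] (a b : V)

def Hd : SimpleGraph V := G.deleteEdges {s(a, b)}

instance : DecidableRel (Hd G a b).Adj := fun u w =>
  decidable_of_iff (G.Adj u w ∧ ¬ s(u, w) = s(a, b)) (by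
    simp [Hd, SimpleGraph.deleteEdges_adj])

variable {G a b}

lemma Hd_adj {u w : V} : (Hd G a b).Adj u w ↔ G.Adj u w ∧ ¬ s(u, w) = s(a, b) := by
  simp [Hd, SimpleGraph.deleteEdges_adj]

lemma Hd_edgeSet {e : Sym2 V} : e ∈ (Hd G a b).edgeSet ↔ e ∈ G.edgeSet ∧ e ≠ s(a, b) := by
  simp [Hd, SimpleGraph.edgeSet_deleteEdges]

lemma Hd_nbr_a (hadj : G.Adj a b) :
    (Hd G a b).neighborFinset a = (G.neighborFinset a).erase b := by
  ext w
  simp only [SimpleGraph.mem_neighborFinset, Finset.mem_erase, Hd_adj]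
  constructor
  · rintro ⟨h1, h2⟩
    refine ⟨fun hw => h2 ?_, h1⟩
    rw [hw]
  · rintro ⟨h1, h2⟩
    exact ⟨h2, fun hmem => h1 (Sym2.congr_right.mp hmem)⟩

lemma Hd_deg_a (hadj : G.Adj a b) : (Hd G a b).degree a = G.degree a - 1 := by
  rw [SimpleGraph.degree, Hd_nbr_a hadj, Finset.card_erase_of_mem
    ((SimpleGraph.mem_neighborFinset G a b).mpr hadj)]
  rfl

lemma Hd_deg_b (hadj : G.Adj a b) : (Hd G a b).degree b = G.degree b - 1 := by
  have hnbr : (Hd G a b).neighborFinset b = (G.neighborFinset b).erase a := by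
    ext w
    simp only [SimpleGraph.mem_neighborFinset, Finset.mem_erase, Hd_adj]
    constructor
    · rintro ⟨h1, h2⟩
      refine ⟨fun hw => h2 ?_, h1⟩
      rw [hw, Sym2.eq_swap]
    · rintro ⟨h1, h2⟩
      refine ⟨h2, fun hmem => ?_⟩
      rcases Sym2.eq_iff.mp hmem with ⟨hba, -⟩ | ⟨-, hwa⟩
      · exact (G.ne_of_adj hadj) hba.symm
      · exact h1 hwa
  rw [SimpleGraph.degree, hnbr, Finset.card_erase_of_mem
    ((SimpleGraph.mem_neighborFinset G b a).mpr hadj.symm)]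
  rfl

lemma Hd_deg_other {v : V} (hva : v ≠ a) (hvb : v ≠ b) :
    (Hd G a b).degree v = G.degree v := by
  have : (Hd G a b).neighborFinset v = G.neighborFinset v := by
    ext w
    simp only [SimpleGraph.mem_neighborFinset, Hd_adj]
    constructor
    · exact fun h => h.1
    · intro h
      refine ⟨h, fun hmem => ?_⟩
      rcases Sym2.eq_iff.mp hmem with ⟨h1, -⟩ | ⟨h2, -⟩
      · exact hva h1
      · exact hvb h2
  rw [SimpleGraph.degree, SimpleGraph.degree, this]

lemma Hd_deg_le (v : V) : (Hd G a b).degree v ≤ G.degree v := by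
  apply Finset.card_le_card
  intro w hw
  rw [SimpleGraph.mem_neighborFinset] at hw ⊢
  exact hw.1

end Inst


section Final

variable {G : SimpleGraph V} [DecidableRel G.Adj] {Δ : ℕ} {a b : V}

lemma build_noext (hnoG : ¬ ∃ c, IsEdgeColoring G Δ c) (habne : a ≠ b) :
    ∀ c, IsEdgeColoring (Hd G a b) Δ c →
      ∀ α, α ∈ Mi (Hd G a b) Δ c a → α ∈ Mi (Hd G a b) Δ c b → False := by
  intro c hc α hma hmb
  apply hnoG
  refine ⟨fun e => if e = s(a, b) then α else c e, ?_, ?_⟩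
  · intro e he
    by_cases h : e = s(a, b)
    · simp only [h, if_pos rfl]
      exact (mem_Mi.mp hma).1
    · simp only [if_neg h]
      exact hc.1 e (Hd_edgeSet.mpr ⟨he, h⟩)
  · intro e he f hf hef ⟨v, hve, hvf⟩
    by_cases h1 : e = s(a, b) <;> by_cases h2 : f = s(a, b)
    · exact absurd (h1.trans h2.symm) hef
    · simp only [if_pos h1, if_neg h2]
      have hf' : f ∈ (Hd G a b).edgeSet := Hd_edgeSet.mpr ⟨hf, h2⟩
      subst h1
      rw [Sym2.mem_iff] at hve
      intro hcon
      rcases hve with rfl | rfl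
      · exact (mem_Mi.mp hma).2 f hf' hvf hcon.symm
      · exact (mem_Mi.mp hmb).2 f hf' hvf hcon.symm
    · simp only [if_neg h1, if_pos h2]
      have he' : e ∈ (Hd G a b).edgeSet := Hd_edgeSet.mpr ⟨he, h1⟩
      subst h2
      rw [Sym2.mem_iff] at hvf
      intro hcon
      rcases hvf with rfl | rfl
      · exact (mem_Mi.mp hma).2 e he' hve hcon
      · exact (mem_Mi.mp hmb).2 e he' hve hcon
    · simp only [if_neg h1, if_neg h2]
      exact hc.2 e (Hd_edgeSet.mpr ⟨he, h1⟩) f (Hd_edgeSet.mpr ⟨hf, h2⟩) hef ⟨v, hve, hvf⟩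


theorem final
    {n Δ : ℕ} {G : SimpleGraph V} [DecidableRel G.Adj]
    (hcard : Fintype.card V = n)
    (hΔ : G.maxDegree = Δ) (hclass2 : chromIndex G = Δ + 1)
    {a b : V} (hab : G.Adj a b) (hfd : G.degree a + G.degree b = Δ + 2)
    (hcrit : IsCriticalEdge G (Sym2.mk a b))
    {x : V} (hxa : x ≠ a) (hxb : x ≠ b)
    (hdeg : n - (G.neighborFinset a ∪ G.neighborFinset b).card ≤ G.degree x) :
    Δ - 1 ≤ G.degree x ∧ ((G.degree a < Δ ∧ G.degree b < Δ) → G.degree x = Δ) := by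
  classical
  have habne : a ≠ b := G.ne_of_adj hab
  have hdaΔ : G.degree a ≤ Δ := hΔ ▸ G.degree_le_maxDegree a
  have hdbΔ : G.degree b ≤ Δ := hΔ ▸ G.degree_le_maxDegree b
  have hdxΔ : G.degree x ≤ Δ := hΔ ▸ G.degree_le_maxDegree x
  have hda1 : 1 ≤ G.degree a :=
    Finset.card_pos.mpr ⟨b, (G.mem_neighborFinset a b).mpr hab⟩
  have hdb1 : 1 ≤ G.degree b :=
    Finset.card_pos.mpr ⟨a, (G.mem_neighborFinset b a).mpr hab.symm⟩
  have hΔ2 : 2 ≤ Δ := by omega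
  -- the graph H = G - ab
  set H := Hd G a b with hHdef
  have hHab : Hd G a b = Hd G b a := by
    unfold Hd
    rw [show s(a, b) = s(b, a) from Sym2.eq_swap]
  have hHa : H.degree a = G.degree a - 1 := Hd_deg_a hab
  have hHb : H.degree b = G.degree b - 1 := Hd_deg_b hab
  have hnoG : ¬ ∃ c, IsEdgeColoring G Δ c := no_coloring_lt G (by rw [hclass2]; omega)
  have hHcol : ∃ c, IsEdgeColoring H Δ c := by
    apply chromIndex_coloring H
    have h2 := hcrit.2
    rw [hclass2] at h2
    show chromIndex (G.deleteEdges {s(a, b)}) ≤ Δ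
    omega
  have hnoext := build_noext (G := G) (Δ := Δ) (a := a) (b := b) hnoG habne
  have hnoext' : ∀ c, IsEdgeColoring H Δ c →
      ∀ α, α ∈ Mi H Δ c b → α ∈ Mi H Δ c a → False :=
    fun c hc α h1 h2 => hnoext c hc α h2 h1
  have hdegH : ∀ v, H.degree v ≤ Δ :=
    fun v => le_trans (Hd_deg_le v) (hΔ ▸ G.degree_le_maxDegree v)
  have hmicard : ∀ c, IsEdgeColoring H Δ c → ∀ v, (Mi H Δ c v).card = Δ - H.degree v :=
    fun c hc v => card_Mi hc (hdegH v)
  -- partition of colors between a and b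
  have hpart : ∀ c, IsEdgeColoring H Δ c → ∀ α, 1 ≤ α → α ≤ Δ →
      α ∈ Mi H Δ c a ∨ α ∈ Mi H Δ c b := by
    intro c hc α h1 h2
    have hdisj : Disjoint (Mi H Δ c a) (Mi H Δ c b) := by
      rw [Finset.disjoint_left]
      intro β hβa hβb
      exact hnoext c hc β hβa hβb
    have hsub : Mi H Δ c a ∪ Mi H Δ c b ⊆ Finset.Icc 1 Δ := by
      intro β hβ
      rcases Finset.mem_union.mp hβ with h | h <;>
        exact Finset.mem_Icc.mpr (mem_Mi.mp h).1
    have hca := hmicard c hc a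
    have hcb := hmicard c hc b
    rw [hHa] at hca
    rw [hHb] at hcb
    have hUcard : (Mi H Δ c a ∪ Mi H Δ c b).card = Δ := by
      rw [Finset.card_union_of_disjoint hdisj]
      omega
    have hU : Mi H Δ c a ∪ Mi H Δ c b = Finset.Icc 1 Δ := by
      apply Finset.eq_of_subset_of_card_le hsub
      rw [hUcard, Nat.card_Icc]
      omega
    have : α ∈ Mi H Δ c a ∪ Mi H Δ c b := by
      rw [hU]
      exact Finset.mem_Icc.mpr ⟨h1, h2⟩
    exact Finset.mem_union.mp this
  have hpart' : ∀ c, IsEdgeColoring H Δ c → ∀ α, 1 ≤ α → α ≤ Δ →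
      α ∈ Mi H Δ c b ∨ α ∈ Mi H Δ c a :=
    fun c hc α h1 h2 => (hpart c hc α h1 h2).symm
  obtain ⟨c, hc⟩ := hHcol
  have hMbne : (Mi H Δ c b).Nonempty := by
    apply Finset.card_pos.mp
    rw [hmicard c hc b, hHb]
    omega
  have hMane : (Mi H Δ c a).Nonempty := by
    apply Finset.card_pos.mp
    rw [hmicard c hc a, hHa]
    omega
  -- degree of x in H equals degree in G
  have hHx : H.degree x = G.degree x := Hd_deg_other hxa hxb
  have hmixcard : (Mi H Δ c x).card = Δ - G.degree x := by
    rw [hmicard c hc x, hHx]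
  -- helper : adjacency transfers into H for edges other than ab
  have hHadj : ∀ {u w : V}, G.Adj u w → ¬(u = a ∧ w = b) → ¬(u = b ∧ w = a) → H.Adj u w := by
    intro u w hG h1 h2
    rw [hHdef]
    rw [Hd_adj]
    refine ⟨hG, fun hmem => ?_⟩
    rcases Sym2.eq_iff.mp hmem with h | h
    · exact h1 h
    · exact h2 h
  by_cases hxN : x ∈ G.neighborFinset a ∪ G.neighborFinset b
  · -- x is a neighbor of a or b : degree is exactly Δ
    have hdx : G.degree x = Δ := by
      by_contra hne
      have hmx : (Mi H Δ c x).Nonempty := by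
        apply Finset.card_pos.mp
        rw [hmixcard]
        omega
      rcases Finset.mem_union.mp hxN with h | h
      · -- x ∈ N(a) : use lemA with roles swapped
        have haxG : G.Adj a x := (G.mem_neighborFinset a x).mp h
        have haxH : H.Adj a x := hHadj haxG (fun hh => hxb hh.2) (fun hh => habne hh.1)
        exact lemA hnoext' habne.symm hpart' hc haxH hxb hMane hmx
      · have hbxG : G.Adj b x := (G.mem_neighborFinset b x).mp h
        have hbxH : H.Adj b x := hHadj hbxG (fun hh => habne hh.1.symm) (fun hh => hxa hh.2)
        exact lemA hnoext habne hpart hc hbxH hxa hMbne hmx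
    exact ⟨by omega, fun _ => hdx⟩
  · -- x has a neighbor y in N(a) ∪ N(b)
    set N := G.neighborFinset a ∪ G.neighborFinset b with hN
    have hyex : ∃ y ∈ N, G.Adj x y := by
      by_contra hcon
      push_neg at hcon
      have hsub : G.neighborFinset x ⊆ Nᶜ.erase x := by
        intro w hw
        have hadjw : G.Adj x w := (G.mem_neighborFinset x w).mp hw
        rw [Finset.mem_erase, Finset.mem_compl]
        exact ⟨fun hwx => G.loopless.irrefl x (hwx ▸ hadjw), fun hwN => hcon w hwN hadjw⟩
      have h1 : G.degree x ≤ Nᶜ.card - 1 := by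
        have := Finset.card_le_card hsub
        rw [Finset.card_erase_of_mem (by rw [Finset.mem_compl]; exact hxN)] at this
        exact this
      have h2 : Nᶜ.card = n - N.card := by
        rw [Finset.card_compl, hcard]
      have h3 : 1 ≤ Nᶜ.card :=
        Finset.card_pos.mpr ⟨x, by rw [Finset.mem_compl]; exact hxN⟩
      omega
    obtain ⟨y, hyN, hxyG⟩ := hyex
    have hya : y ≠ a := fun h =>
      hxN (Finset.mem_union.mpr (Or.inl ((G.mem_neighborFinset a x).mpr (h ▸ hxyG.symm))))
    have hyb : y ≠ b := fun h =>
      hxN (Finset.mem_union.mpr (Or.inr ((G.mem_neighborFinset b x).mpr (h ▸ hxyG.symm))))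
    have hxyH : H.Adj x y := hHadj hxyG (fun hh => hxa hh.1) (fun hh => hxb hh.1)
    rcases Finset.mem_union.mp hyN with h | h
    · -- y ∈ N(a) : mirrored orientation (roles of a,b swapped)
      have hayG : G.Adj a y := (G.mem_neighborFinset a y).mp h
      have hayH : H.Adj a y := hHadj hayG (fun hh => hyb hh.2) (fun hh => habne hh.1)
      constructor
      · -- degree ≥ Δ - 1
        by_contra hlt
        have h2x : 2 ≤ (Mi H Δ c x).card := by rw [hmixcard]; omega
        exact lemP1 hnoext' habne.symm hpart' hyb hya hxb hxa hxyH hayH hc hMane h2x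
      · rintro ⟨hda', hdb'⟩
        by_contra hne
        have hmx : (Mi H Δ c x).Nonempty := by
          apply Finset.card_pos.mp
          rw [hmixcard]
          omega
        have h2a : 2 ≤ (Mi H Δ c a).card := by
          rw [hmicard c hc a, hHa]
          omega
        exact lemP2 hnoext' habne.symm hpart' hyb hya hxb hxa hxyH hayH hc hmx h2a
    · have hbyG : G.Adj b y := (G.mem_neighborFinset b y).mp h
      have hbyH : H.Adj b y := hHadj hbyG (fun hh => habne hh.1.symm) (fun hh => hya hh.2)
      constructor
      · by_contra hlt
        have h2x : 2 ≤ (Mi H Δ c x).card := by rw [hmixcard]; omega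
        exact lemP1 hnoext habne hpart hya hyb hxa hxb hxyH hbyH hc hMbne h2x
      · rintro ⟨hda', hdb'⟩
        by_contra hne
        have hmx : (Mi H Δ c x).Nonempty := by
          apply Finset.card_pos.mp
          rw [hmixcard]
          omega
        have h2b : 2 ≤ (Mi H Δ c b).card := by
          rw [hmicard c hc b, hHb]
          omega
        exact lemP2 hnoext habne hpart hya hyb hxa hxb hxyH hbyH hc hmx h2b

end Final

end EC


/-- Let `G` be an `n`-vertex Class 2 graph with maximum degree `Δ` having
a full-deficiency pair `(a,b)` with `ab` a critical edge. Then every vertex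
`x ∈ V(G) \ {a,b}` with `d_G(x) ≥ n - |N(a) ∪ N(b)|` has `d_G(x) ≥ Δ - 1`; furthermore,
if `d_G(a) < Δ` and `d_G(b) < Δ`, then `d_G(x) = Δ`. -/
theorem fullDeficiencyPair_large_degree
    {V : Type*} [Fintype V] [DecidableEq V]
    (n Δ : ℕ) (G : SimpleGraph V) [DecidableRel G.Adj]
    (hcard : Fintype.card V = n)
    (hΔ : G.maxDegree = Δ) (hclass2 : chromIndex G = Δ + 1)
    (a b : V) (hab : G.Adj a b) (hfd : G.degree a + G.degree b = Δ + 2)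
    (hcrit : IsCriticalEdge G (Sym2.mk a b))
    (x : V) (hxa : x ≠ a) (hxb : x ≠ b)
    (hdeg : n - (G.neighborFinset a ∪ G.neighborFinset b).card ≤ G.degree x) :
    Δ - 1 ≤ G.degree x ∧ ((G.degree a < Δ ∧ G.degree b < Δ) → G.degree x = Δ) := by
  exact EC.final hcard hΔ hclass2 hab hfd hcrit hxa hxb hdeg
end

section
/- (Vizing's Adjacency Lemma) Let G be a Class 2 simple graph with maximum degree Δ. If e = xy is a critical edge of G, then x has at least Δ − d_G(y) + 1 neighbors of degree Δ in V(G) ∖ {y}. -/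
set_option linter.unusedSectionVars false
set_option linter.unusedVariables false
set_option maxHeartbeats 1000000
open SimpleGraph

section Main
variable {V : Type*} [Fintype V] [DecidableEq V]

/-- `G - xy`. -/
abbrev Gd (G : SimpleGraph V) (x y : V) : SimpleGraph V :=
  G.deleteEdges {Sym2.mk x y}

def Proper (G : SimpleGraph V) (Δ : ℕ) (x y : V) (c : Sym2 V → ℕ) : Prop :=
  IsEdgeColoring (Gd G x y) Δ c

def Miss (G : SimpleGraph V) (Δ : ℕ) (x y : V) (c : Sym2 V → ℕ) (v : V) (β : ℕ) : Prop :=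
  1 ≤ β ∧ β ≤ Δ ∧ ∀ g ∈ (Gd G x y).edgeSet, v ∈ g → c g ≠ β

variable {G : SimpleGraph V} {Δ : ℕ} {x y : V}

lemma sym2_ne {v w : V} (hv : v ≠ x ∨ w ≠ y) (hv' : v ≠ y ∨ w ≠ x) :
    Sym2.mk v w ≠ Sym2.mk x y := by
  intro h
  rw [Sym2.eq_iff] at h
  rcases h with ⟨h1, h2⟩ | ⟨h1, h2⟩
  · rcases hv with h | h <;> exact h (by simp [h1, h2])
  · rcases hv' with h | h <;> exact h (by simp [h1, h2])

lemma gd_adj {v w : V} : (Gd G x y).Adj v w ↔ G.Adj v w ∧ Sym2.mk v w ≠ Sym2.mk x y := by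
  rw [SimpleGraph.deleteEdges_adj]
  simp

lemma gd_adj_x {w : V} : (Gd G x y).Adj x w ↔ G.Adj x w ∧ w ≠ y := by
  rw [gd_adj]
  constructor
  · rintro ⟨h1, h2⟩
    refine ⟨h1, fun hw => h2 (by rw [hw])⟩
  · rintro ⟨h1, h2⟩
    exact ⟨h1, sym2_ne (Or.inr h2) (Or.inr h1.ne')⟩

lemma gd_adj_y {w : V} : (Gd G x y).Adj y w ↔ G.Adj y w ∧ w ≠ x := by
  rw [gd_adj]
  constructor
  · rintro ⟨h1, h2⟩
    refine ⟨h1, fun hw => h2 ?_⟩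
    rw [hw, Sym2.eq_swap]
  · rintro ⟨h1, h2⟩
    exact ⟨h1, sym2_ne (Or.inr h1.ne') (Or.inr h2)⟩

lemma gd_edge_exists {g : Sym2 V} {v : V} (hg : g ∈ (Gd G x y).edgeSet) (hv : v ∈ g) :
    ∃ w, (Gd G x y).Adj v w ∧ g = Sym2.mk v w := by
  induction g with
  | _ a b =>
    rw [Sym2.mem_iff] at hv
    rw [SimpleGraph.mem_edgeSet] at hg
    rcases hv with rfl | rfl
    · exact ⟨b, hg, rfl⟩
    · exact ⟨a, hg.symm, by rw [Sym2.eq_swap]⟩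

lemma gd_le : Gd G x y ≤ G := SimpleGraph.deleteEdges_le _

/-- If `G` itself has a `Δ`-coloring, contradiction with `χ'(G)=Δ+1`. -/
lemma no_full_coloring (hclass2 : chromIndex G = Δ + 1) (c : Sym2 V → ℕ)
    (hc : IsEdgeColoring G Δ c) : False := by
  have h1 : chromIndex G ≤ Δ := Nat.sInf_le ⟨c, hc⟩
  omega

/-- Base case: a color missing at both `x` and `y` colors the edge `xy`. -/
lemma color_e (hadj : G.Adj x y) (hclass2 : chromIndex G = Δ + 1)
    {c : Sym2 V → ℕ} (hc : Proper G Δ x y c) {β : ℕ}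
    (hx : Miss G Δ x y c x β) (hy : Miss G Δ x y c y β) : False := by
  classical
  set f : Sym2 V := Sym2.mk x y with hf
  apply no_full_coloring hclass2 (Function.update c f β)
  have hedge : ∀ g ∈ G.edgeSet, g ≠ f → g ∈ (Gd G x y).edgeSet := by
    intro g hg hgf
    rw [SimpleGraph.edgeSet_deleteEdges]
    exact ⟨hg, by simpa using hgf⟩
  constructor
  · intro e he
    by_cases hef : e = f
    · rw [hef, Function.update_self]
      exact ⟨hx.1, hx.2.1⟩
    · rw [Function.update_of_ne hef]
      exact hc.1 e (hedge e he hef)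
  · intro e he g hg hne hshare
    obtain ⟨v, hve, hvg⟩ := hshare
    by_cases hef : e = f
    · subst hef
      rw [Function.update_self, Function.update_of_ne (by tauto)]
      have hvxy : v = x ∨ v = y := by rwa [hf, Sym2.mem_iff] at hve
      have hgd : g ∈ (Gd G x y).edgeSet := hedge g hg (by tauto)
      rcases hvxy with rfl | rfl
      · exact fun h => hx.2.2 g hgd hvg h.symm
      · exact fun h => hy.2.2 g hgd hvg h.symm
    · by_cases hgf : g = f
      · subst hgf
        rw [Function.update_self, Function.update_of_ne hef]
        have hvxy : v = x ∨ v = y := by rwa [hf, Sym2.mem_iff] at hvg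
        have hed : e ∈ (Gd G x y).edgeSet := hedge e he hef
        rcases hvxy with rfl | rfl
        · exact fun h => hx.2.2 e hed hve h
        · exact fun h => hy.2.2 e hed hve h
      · rw [Function.update_of_ne hef, Function.update_of_ne hgf]
        exact hc.2 e (hedge e he hef) g (hedge g hg hgf) hne ⟨v, hve, hvg⟩

/-- Recoloring an edge `xz` of `G-xy` with a color missing at both ends stays proper. -/
lemma recolor_proper {c : Sym2 V → ℕ} (hc : Proper G Δ x y c) {z : V}
    (hz : (Gd G x y).Adj x z) {β : ℕ}
    (hx : Miss G Δ x y c x β) (hzm : Miss G Δ x y c z β) :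
    Proper G Δ x y (Function.update c (Sym2.mk x z) β) := by
  classical
  set f : Sym2 V := Sym2.mk x z with hf
  have hfe : f ∈ (Gd G x y).edgeSet := (SimpleGraph.mem_edgeSet _).2 hz
  constructor
  · intro e he
    by_cases hef : e = f
    · rw [hef, Function.update_self]; exact ⟨hx.1, hx.2.1⟩
    · rw [Function.update_of_ne hef]; exact hc.1 e he
  · intro e he g hg hne hshare
    obtain ⟨v, hve, hvg⟩ := hshare
    by_cases hef : e = f
    · subst hef
      rw [Function.update_self, Function.update_of_ne (by tauto)]
      have hvxz : v = x ∨ v = z := by rwa [hf, Sym2.mem_iff] at hve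
      rcases hvxz with rfl | rfl
      · exact fun h => hx.2.2 g hg hvg h.symm
      · exact fun h => hzm.2.2 g hg hvg h.symm
    · by_cases hgf : g = f
      · subst hgf
        rw [Function.update_self, Function.update_of_ne hef]
        have hvxz : v = x ∨ v = z := by rwa [hf, Sym2.mem_iff] at hvg
        rcases hvxz with rfl | rfl
        · exact fun h => hx.2.2 e he hve h
        · exact fun h => hzm.2.2 e he hve h
      · rw [Function.update_of_ne hef, Function.update_of_ne hgf]
        exact hc.2 e he g hg hne ⟨v, hve, hvg⟩

/-- Missing colors at vertices not on the recolored edge are preserved. -/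
lemma miss_update {c : Sym2 V → ℕ} {f : Sym2 V} {β : ℕ} {v : V} (hv : v ∉ f)
    {β' : ℕ} (h : Miss G Δ x y c v β') :
    Miss G Δ x y (Function.update c f β) v β' := by
  classical
  refine ⟨h.1, h.2.1, fun g hg hvg => ?_⟩
  have hgf : g ≠ f := fun hh => hv (hh ▸ hvg)
  rw [Function.update_of_ne hgf]
  exact h.2.2 g hg hvg

/-- After recoloring edge `xz` (whose old color is `δ`), `δ` becomes missing at `x`. -/
lemma miss_update_x {c : Sym2 V → ℕ} (hc : Proper G Δ x y c) {z : V}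
    (hz : (Gd G x y).Adj x z) {β : ℕ} (hx : Miss G Δ x y c x β) :
    Miss G Δ x y (Function.update c (Sym2.mk x z) β) x (c (Sym2.mk x z)) := by
  classical
  set f : Sym2 V := Sym2.mk x z with hf
  have hfe : f ∈ (Gd G x y).edgeSet := (SimpleGraph.mem_edgeSet _).2 hz
  have hbounds := hc.1 f hfe
  refine ⟨hbounds.1, hbounds.2, fun g hg hvg => ?_⟩
  by_cases hgf : g = f
  · subst hgf
    rw [Function.update_self]
    intro h
    exact hx.2.2 f hfe (by rw [hf]; exact Sym2.mem_mk_left x z) h.symm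
  · rw [Function.update_of_ne hgf]
    exact hc.2 g hg f hfe hgf ⟨x, hvg, Sym2.mem_mk_left x z⟩

end Main


section Walks
variable {V : Type*} {H : SimpleGraph V}

lemma walk_prefix
    (hdeg2 : ∀ v w₁ w₂ w₃, H.Adj v w₁ → H.Adj v w₂ → H.Adj v w₃ →
      (w₁ = w₂ ∨ w₁ = w₃ ∨ w₂ = w₃)) :
    ∀ {a b₁ b₂ : V} (p : H.Walk a b₁) (q : H.Walk a b₂), p.IsPath → q.IsPath →
    (∀ w₁ w₂, H.Adj a w₁ → H.Adj a w₂ → w₁ ∈ p.support → w₂ ∈ q.support → w₁ = w₂) →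
    (p.support ⊆ q.support ∨ q.support ⊆ p.support) := by
  intro a b₁ b₂ p
  induction p with
  | nil =>
    intro q _ _ _
    left
    intro v hv
    simp only [Walk.support_nil, List.mem_singleton] at hv
    subst hv
    exact q.start_mem_support
  | @cons a c b₁ h p ih =>
    intro q hp hq hcond
    cases q with
    | nil =>
      right
      intro v hv
      simp only [Walk.support_nil, List.mem_singleton] at hv
      subst hv
      exact (Walk.cons h p).start_mem_support
    | @cons _ c' _ h' q' =>
      have hc : c = c' := by
        apply hcond c c' h h'
        · simp [Walk.support_cons, p.start_mem_support]
        · simp [Walk.support_cons, q'.start_mem_support]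
      subst hc
      have hp' : p.IsPath ∧ a ∉ p.support := by
        constructor
        · exact hp.of_cons
        · exact ((Walk.cons_isPath_iff h p).1 hp).2
      have hq' : q'.IsPath ∧ a ∉ q'.support := by
        constructor
        · exact hq.of_cons
        · exact ((Walk.cons_isPath_iff h' q').1 hq).2
      have hrec := ih q' hp'.1 hq'.1 ?_
      · rcases hrec with hr | hr
        · left
          simp only [Walk.support_cons]
          exact List.cons_subset_cons a hr
        · right
          simp only [Walk.support_cons]
          exact List.cons_subset_cons a hr
      · intro w₁ w₂ hw₁ hw₂ hm₁ hm₂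
        rcases hdeg2 c w₁ w₂ a hw₁ hw₂ h.symm with h1 | h1 | h1
        · exact h1
        · exact absurd (h1 ▸ hm₁) hp'.2
        · exact absurd (h1 ▸ hm₂) hq'.2

lemma interior_two :
    ∀ {a b v : V} (q : H.Walk a b), q.IsPath → v ∈ q.support → v ≠ a → v ≠ b →
    ∃ w₁ w₂, w₁ ≠ w₂ ∧ H.Adj v w₁ ∧ H.Adj v w₂ := by
  intro a b v q
  induction q with
  | nil =>
    intro _ hv hva _
    simp only [Walk.support_nil, List.mem_singleton] at hv
    exact absurd hv hva
  | @cons a c b h q' ih =>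
    intro hq hv hva hvb
    simp only [Walk.support_cons, List.mem_cons] at hv
    rcases hv with rfl | hv
    · exact absurd rfl hva
    by_cases hvc : v = c
    · subst hvc
      cases q' with
      | nil => exact absurd rfl hvb
      | @cons _ d _ h2 q3 =>
        refine ⟨a, d, ?_, h.symm, h2⟩
        intro had
        have : a ∈ (Walk.cons h2 q3).support := by
          subst had
          simp [Walk.support_cons, q3.start_mem_support]
        exact ((Walk.cons_isPath_iff h (Walk.cons h2 q3)).1 hq).2 this
    · exact ih hq.of_cons hv hvc hvb

lemma not_reach_two [DecidableEq V]
    (hdeg2 : ∀ v w₁ w₂ w₃, H.Adj v w₁ → H.Adj v w₂ → H.Adj v w₃ →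
      (w₁ = w₂ ∨ w₁ = w₃ ∨ w₂ = w₃))
    {a u w : V} (hau : a ≠ u) (haw : a ≠ w) (huw : u ≠ w)
    (ha : ∀ w₁ w₂, H.Adj a w₁ → H.Adj a w₂ → w₁ = w₂)
    (hu : ∀ w₁ w₂, H.Adj u w₁ → H.Adj u w₂ → w₁ = w₂)
    (hw : ∀ w₁ w₂, H.Adj w w₁ → H.Adj w w₂ → w₁ = w₂) :
    ¬ (H.Reachable a u ∧ H.Reachable a w) := by
  rintro ⟨h1, h2⟩
  obtain ⟨p0⟩ := h1
  obtain ⟨q0⟩ := h2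
  set p := p0.toPath with hpdef
  set q := q0.toPath with hqdef
  have hcond : ∀ w₁ w₂, H.Adj a w₁ → H.Adj a w₂ → w₁ ∈ (p : H.Walk a u).support →
      w₂ ∈ (q : H.Walk a w).support → w₁ = w₂ := fun w₁ w₂ h1 h2 _ _ => ha w₁ w₂ h1 h2
  rcases walk_prefix hdeg2 (p : H.Walk a u) (q : H.Walk a w) p.2 q.2 hcond with hr | hr
  · have humem : u ∈ (q : H.Walk a w).support := hr (Walk.end_mem_support _)
    obtain ⟨w₁, w₂, hne, ha1, ha2⟩ := interior_two (q : H.Walk a w) q.2 humem (Ne.symm hau) huw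
    exact hne (hu w₁ w₂ ha1 ha2)
  · have hwmem : w ∈ (p : H.Walk a u).support := hr (Walk.end_mem_support _)
    obtain ⟨w₁, w₂, hne, ha1, ha2⟩ := interior_two (p : H.Walk a u) p.2 hwmem (Ne.symm haw) (Ne.symm huw)
    exact hne (hw w₁ w₂ ha1 ha2)

end Walks

section Main2
variable {V : Type*} [Fintype V] [DecidableEq V] {G : SimpleGraph V} {Δ : ℕ} {x y : V}

/-- A multifan at `x` w.r.t. the uncolored edge `xy`, as a function `s : ℕ → V`
with `s 0 = y`, of length `p`. -/
structure MFan (G : SimpleGraph V) (Δ : ℕ) (x y : V) (c : Sym2 V → ℕ) (p : ℕ) (s : ℕ → V) :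
    Prop where
  pos : 1 ≤ p
  zero : s 0 = y
  inj : ∀ i j, i < p → j < p → s i = s j → i = j
  ner : ∀ i, i < p → s i ≠ x
  adj : ∀ i, i < p → G.Adj x (s i)
  cond : ∀ i, i < p → 1 ≤ i → ∃ j, j < i ∧ Miss G Δ x y c (s j) (c (Sym2.mk x (s i)))

lemma MFan.restrict {c : Sym2 V → ℕ} {p q : ℕ} {s : ℕ → V}
    (h : MFan G Δ x y c p s) (h1 : 1 ≤ q) (h2 : q ≤ p) : MFan G Δ x y c q s :=
  ⟨h1, h.zero, fun i j hi hj => h.inj i j (lt_of_lt_of_le hi h2) (lt_of_lt_of_le hj h2),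
   fun i hi => h.ner i (lt_of_lt_of_le hi h2), fun i hi => h.adj i (lt_of_lt_of_le hi h2),
   fun i hi => h.cond i (lt_of_lt_of_le hi h2)⟩

lemma MFan.sne_y {c : Sym2 V → ℕ} {p : ℕ} {s : ℕ → V} (h : MFan G Δ x y c p s)
    {i : ℕ} (hi : i < p) (h1 : 1 ≤ i) : s i ≠ y := by
  intro he
  have : i = 0 := h.inj i 0 hi (by omega) (by rw [he, h.zero])
  omega

lemma MFan.gd_adj' {c : Sym2 V → ℕ} {p : ℕ} {s : ℕ → V} (h : MFan G Δ x y c p s)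
    {i : ℕ} (hi : i < p) (h1 : 1 ≤ i) : (Gd G x y).Adj x (s i) :=
  gd_adj_x.2 ⟨h.adj i hi, h.sne_y hi h1⟩

/-- Part (a) of Vizing's multifan theorem: no color missing at `x` is also missing at
a multifan vertex. -/
lemma parta (hadj : G.Adj x y) (hclass2 : chromIndex G = Δ + 1) :
    ∀ i : ℕ, ∀ c : Sym2 V → ℕ, ∀ s : ℕ → V, Proper G Δ x y c → MFan G Δ x y c (i + 1) s →
      ∀ β, Miss G Δ x y c x β → Miss G Δ x y c (s i) β → False := by
  intro i
  induction i using Nat.strong_induction_on with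
  | _ i ih =>
    intro c s hc hf β hmx hms
    rcases Nat.eq_zero_or_pos i with rfl | hipos
    · rw [hf.zero] at hms
      exact color_e hadj hclass2 hc hmx hms
    · obtain ⟨j, hji, hjm⟩ := hf.cond i (by omega) hipos
      classical
      set f : Sym2 V := Sym2.mk x (s i) with hfdef
      set δ : ℕ := c f with hδdef
      set c' : Sym2 V → ℕ := Function.update c f β with hc'def
      have hxadj : (Gd G x y).Adj x (s i) := hf.gd_adj' (by omega) hipos
      have hc' : Proper G Δ x y c' := recolor_proper hc hxadj hmx hms
      have hmx' : Miss G Δ x y c' x δ := miss_update_x hc hxadj hmx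
      have hsj_ne : s j ∉ f := by
        rw [hfdef, Sym2.mem_iff]
        push_neg
        constructor
        · exact hf.ner j (by omega)
        · intro he
          have := hf.inj j i (by omega) (by omega) he
          omega
      have hmsj' : Miss G Δ x y c' (s j) δ := miss_update hsj_ne hjm
      -- the prefix of length j+1 is still a multifan for c'
      have hfan' : MFan G Δ x y c' (j + 1) s := by
        refine ⟨by omega, hf.zero, fun a b ha hb => hf.inj a b (by omega) (by omega),
          fun a ha => hf.ner a (by omega), fun a ha => hf.adj a (by omega), ?_⟩
        intro m hm h1m
        obtain ⟨l, hlm, hlmiss⟩ := hf.cond m (by omega) h1m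
        have hedge_ne : Sym2.mk x (s m) ≠ f := by
          rw [hfdef]
          intro he
          rw [Sym2.congr_right] at he
          have := hf.inj m i (by omega) (by omega) he
          omega
        have hsl_ne : s l ∉ f := by
          rw [hfdef, Sym2.mem_iff]
          push_neg
          refine ⟨hf.ner l (by omega), fun he => ?_⟩
          have := hf.inj l i (by omega) (by omega) he
          omega
        refine ⟨l, hlm, ?_⟩
        have : c' (Sym2.mk x (s m)) = c (Sym2.mk x (s m)) := by
          rw [hc'def, Function.update_of_ne hedge_ne]
        rw [this]
        exact miss_update hsl_ne hlmiss
      exact ih j hji c' s hc' hfan' δ hmx' hmsj'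

open Classical in
/-- The finset of missing colors. -/
noncomputable def missF (G : SimpleGraph V) (Δ : ℕ) (x y : V) (c : Sym2 V → ℕ) (v : V) :
    Finset ℕ :=
  (Finset.Icc 1 Δ).filter (fun β => ∀ g ∈ (Gd G x y).edgeSet, v ∈ g → c g ≠ β)

lemma mem_missF {c : Sym2 V → ℕ} {v : V} {β : ℕ} :
    β ∈ missF G Δ x y c v ↔ Miss G Δ x y c v β := by
  classical
  simp [missF, Miss, Finset.mem_filter, Finset.mem_Icc, and_assoc]

open Finset in
lemma missF_card {c : Sym2 V → ℕ} (v : V) (N : Finset V)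
    (hN : ∀ g ∈ (Gd G x y).edgeSet, v ∈ g → ∃ w ∈ N, g = Sym2.mk v w) :
    Δ - N.card ≤ (missF G Δ x y c v).card := by
  classical
  set P : Finset ℕ := N.image (fun w => c (Sym2.mk v w)) with hP
  have hsub : Finset.Icc 1 Δ \ P ⊆ missF G Δ x y c v := by
    intro β hβ
    rw [Finset.mem_sdiff] at hβ
    rw [mem_missF]
    rw [Finset.mem_Icc] at hβ
    refine ⟨hβ.1.1, hβ.1.2, fun g hg hvg hcg => ?_⟩
    obtain ⟨w, hw, rfl⟩ := hN g hg hvg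
    exact hβ.2 (Finset.mem_image.2 ⟨w, hw, hcg⟩)
  calc Δ - N.card ≤ (Finset.Icc 1 Δ).card - P.card := by
        have h1 : (Finset.Icc 1 Δ).card = Δ := by simp
        have h2 : P.card ≤ N.card := Finset.card_image_le
        omega
    _ ≤ (Finset.Icc 1 Δ \ P).card := Finset.le_card_sdiff P _
    _ ≤ _ := Finset.card_le_card hsub

/-- The `Gd`-edges at `x` are covered by the `G`-neighbors of `x` other than `y`. -/
lemma cover_x [DecidableRel G.Adj] :
    ∀ g ∈ (Gd G x y).edgeSet, x ∈ g →
      ∃ w ∈ (G.neighborFinset x).erase y, g = Sym2.mk x w := by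
  intro g hg hxg
  obtain ⟨w, hw, rfl⟩ := gd_edge_exists hg hxg
  rw [gd_adj_x] at hw
  exact ⟨w, Finset.mem_erase.2 ⟨hw.2, (SimpleGraph.mem_neighborFinset _ _ _).2 hw.1⟩, rfl⟩

lemma cover_y [DecidableRel G.Adj] :
    ∀ g ∈ (Gd G x y).edgeSet, y ∈ g →
      ∃ w ∈ (G.neighborFinset y).erase x, g = Sym2.mk y w := by
  intro g hg hxg
  obtain ⟨w, hw, rfl⟩ := gd_edge_exists hg hxg
  rw [gd_adj_y] at hw
  exact ⟨w, Finset.mem_erase.2 ⟨hw.2, (SimpleGraph.mem_neighborFinset _ _ _).2 hw.1⟩, rfl⟩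

lemma cover_other [DecidableRel G.Adj] {v : V} (hvx : v ≠ x) (hvy : v ≠ y) :
    ∀ g ∈ (Gd G x y).edgeSet, v ∈ g →
      ∃ w ∈ G.neighborFinset v, g = Sym2.mk v w := by
  intro g hg hxg
  obtain ⟨w, hw, rfl⟩ := gd_edge_exists hg hxg
  exact ⟨w, (SimpleGraph.mem_neighborFinset _ _ _).2 (gd_le hw), rfl⟩

/-- There is a color missing at `x`. -/
lemma exists_miss_x [DecidableRel G.Adj] (hadj : G.Adj x y) (hΔ : G.maxDegree = Δ)
    {c : Sym2 V → ℕ} : ∃ γ, Miss G Δ x y c x γ := by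
  classical
  have hd : G.degree x ≤ Δ := hΔ ▸ G.degree_le_maxDegree x
  have hd1 : 1 ≤ G.degree x := by
    rw [← SimpleGraph.card_neighborFinset_eq_degree]
    exact Finset.card_pos.2 ⟨y, (SimpleGraph.mem_neighborFinset _ _ _).2 hadj⟩
  have hcard : ((G.neighborFinset x).erase y).card = G.degree x - 1 := by
    rw [Finset.card_erase_of_mem ((SimpleGraph.mem_neighborFinset _ _ _).2 hadj)]
    simp [SimpleGraph.card_neighborFinset_eq_degree]
  have := missF_card (Δ := Δ) (c := c) x ((G.neighborFinset x).erase y) cover_x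
  rw [hcard] at this
  have hpos : 0 < (missF G Δ x y c x).card := by omega
  obtain ⟨γ, hγ⟩ := Finset.card_pos.1 hpos
  exact ⟨γ, mem_missF.1 hγ⟩

end Main2

section Swap
variable {V : Type*} [Fintype V] [DecidableEq V] {G : SimpleGraph V} {Δ : ℕ} {x y : V}

/-- The `(α,γ)`-chain graph of `G - xy`. -/
abbrev CG (G : SimpleGraph V) (x y : V) (c : Sym2 V → ℕ) (α γ : ℕ) : SimpleGraph V :=
  chainGraph (Gd G x y) c α γ

lemma cg_adj {c : Sym2 V → ℕ} {α γ : ℕ} {a b : V} :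
    (CG G x y c α γ).Adj a b ↔
      (Gd G x y).Adj a b ∧ (c (Sym2.mk a b) = α ∨ c (Sym2.mk a b) = γ) :=
  Iff.rfl

open Classical in
noncomputable def swapC (G : SimpleGraph V) (x y : V) (c : Sym2 V → ℕ) (α γ : ℕ) (u : V) :
    Sym2 V → ℕ := fun f =>
  if c f = α ∧ f ∈ (Gd G x y).edgeSet ∧ ∃ v ∈ f, (CG G x y c α γ).Reachable u v then γ
  else if c f = γ ∧ f ∈ (Gd G x y).edgeSet ∧ ∃ v ∈ f, (CG G x y c α γ).Reachable u v then α
  else c f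

variable {c : Sym2 V → ℕ} {α γ : ℕ} {u : V}

/-- If an `(α,γ)`-edge has an endpoint in the component of `u`, both its endpoints are. -/
lemma chain_edge_reach {f : Sym2 V} (hf : f ∈ (Gd G x y).edgeSet)
    (hcol : c f = α ∨ c f = γ) {v : V} (hv : v ∈ f)
    (hr : ∃ w ∈ f, (CG G x y c α γ).Reachable u w) : (CG G x y c α γ).Reachable u v := by
  obtain ⟨w, hw, hrw⟩ := hr
  induction f with
  | _ a b =>
    have hadj : (CG G x y c α γ).Adj a b := cg_adj.2 ⟨(SimpleGraph.mem_edgeSet _).1 hf, hcol⟩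
    rw [Sym2.mem_iff] at hv hw
    rcases hv with rfl | rfl <;> rcases hw with rfl | rfl
    · exact hrw
    · exact hrw.trans hadj.symm.reachable
    · exact hrw.trans hadj.reachable
    · exact hrw

lemma swapC_eq_far {f : Sym2 V} (h : ¬ ∃ v ∈ f, (CG G x y c α γ).Reachable u v) :
    swapC G x y c α γ u f = c f := by
  rw [swapC]
  rw [if_neg (fun hh => h hh.2.2), if_neg (fun hh => h hh.2.2)]

lemma swapC_eq_other {f : Sym2 V} (h1 : c f ≠ α) (h2 : c f ≠ γ) :
    swapC G x y c α γ u f = c f := by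
  rw [swapC]
  rw [if_neg (fun hh => h1 hh.1), if_neg (fun hh => h2 hh.1)]

lemma swapC_eq_α {f : Sym2 V} (h1 : c f = α) (h2 : f ∈ (Gd G x y).edgeSet)
    (h3 : ∃ v ∈ f, (CG G x y c α γ).Reachable u v) :
    swapC G x y c α γ u f = γ := by
  rw [swapC, if_pos ⟨h1, h2, h3⟩]

lemma swapC_eq_γ (hαγ : α ≠ γ) {f : Sym2 V} (h1 : c f = γ) (h2 : f ∈ (Gd G x y).edgeSet)
    (h3 : ∃ v ∈ f, (CG G x y c α γ).Reachable u v) :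
    swapC G x y c α γ u f = α := by
  rw [swapC, if_neg (by rw [h1]; tauto), if_pos ⟨h1, h2, h3⟩]

/-- Edges at a vertex outside the component of `u` are unchanged. -/
lemma swapC_eq_at_far {v : V} (hv : ¬ (CG G x y c α γ).Reachable u v) {f : Sym2 V}
    (hf : f ∈ (Gd G x y).edgeSet) (hvf : v ∈ f) :
    swapC G x y c α γ u f = c f := by
  by_cases hcol : c f = α ∨ c f = γ
  · refine swapC_eq_far fun h => hv (chain_edge_reach hf hcol hvf h)
  · push_neg at hcol
    exact swapC_eq_other hcol.1 hcol.2

/-- The swapped coloring is proper. -/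
lemma swap_proper (hc : Proper G Δ x y c) (hα1 : 1 ≤ α) (hα2 : α ≤ Δ) (hγ1 : 1 ≤ γ)
    (hγ2 : γ ≤ Δ) (hαγ : α ≠ γ) : Proper G Δ x y (swapC G x y c α γ u) := by
  classical
  constructor
  · intro e he
    by_cases h1 : c e = α ∧ e ∈ (Gd G x y).edgeSet ∧ ∃ v ∈ e, (CG G x y c α γ).Reachable u v
    · rw [swapC_eq_α h1.1 h1.2.1 h1.2.2]; exact ⟨hγ1, hγ2⟩
    · by_cases h2 : c e = γ ∧ e ∈ (Gd G x y).edgeSet ∧ ∃ v ∈ e, (CG G x y c α γ).Reachable u v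
      · rw [swapC_eq_γ hαγ h2.1 h2.2.1 h2.2.2]; exact ⟨hα1, hα2⟩
      · have : swapC G x y c α γ u e = c e := by
          rw [swapC, if_neg h1, if_neg h2]
        rw [this]; exact hc.1 e he
  · intro e he f hf hne hshare
    obtain ⟨v, hve, hvf⟩ := hshare
    have hcc : c e ≠ c f := hc.2 e he f hf hne ⟨v, hve, hvf⟩
    by_cases hre : ∃ w ∈ e, (CG G x y c α γ).Reachable u w
    · by_cases hce : c e = α ∨ c e = γ
      · -- e is a swapped chain edge; v is in the component
        have hrv : (CG G x y c α γ).Reachable u v := chain_edge_reach he hce hve hre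
        have hrf : ∃ w ∈ f, (CG G x y c α γ).Reachable u w := ⟨v, hvf, hrv⟩
        by_cases hcf : c f = α ∨ c f = γ
        · -- both swapped
          rcases hce with h1 | h1 <;> rcases hcf with h2 | h2
          · exact absurd (h1.trans h2.symm) hcc
          · rw [swapC_eq_α h1 he hre, swapC_eq_γ hαγ h2 hf hrf]; exact Ne.symm hαγ
          · rw [swapC_eq_γ hαγ h1 he hre, swapC_eq_α h2 hf hrf]; exact hαγ
          · exact absurd (h1.trans h2.symm) hcc
        · push_neg at hcf
          rw [swapC_eq_other hcf.1 hcf.2]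
          rcases hce with h1 | h1
          · rw [swapC_eq_α h1 he hre]; exact fun h => hcf.2 h.symm
          · rw [swapC_eq_γ hαγ h1 he hre]; exact fun h => hcf.1 h.symm
      · push_neg at hce
        rw [swapC_eq_other hce.1 hce.2]
        by_cases hcf : c f = α ∨ c f = γ
        · by_cases hrf : ∃ w ∈ f, (CG G x y c α γ).Reachable u w
          · rcases hcf with h2 | h2
            · rw [swapC_eq_α h2 hf hrf]; exact hce.2
            · rw [swapC_eq_γ hαγ h2 hf hrf]; exact hce.1
          · rw [swapC_eq_far hrf]; exact hcc
        · push_neg at hcf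
          rw [swapC_eq_other hcf.1 hcf.2]; exact hcc
    · rw [swapC_eq_far hre]
      by_cases hrf : ∃ w ∈ f, (CG G x y c α γ).Reachable u w
      · by_cases hcf : c f = α ∨ c f = γ
        · -- f swapped, e not; shared vertex forces e in component if c e ∈ {α,γ}
          have hrv : (CG G x y c α γ).Reachable u v := chain_edge_reach hf hcf hvf hrf
          have hce : ¬ (c e = α ∨ c e = γ) := fun hce => hre ⟨v, hve, hrv⟩
          push_neg at hce
          rcases hcf with h2 | h2
          · rw [swapC_eq_α h2 hf hrf]; exact hce.2
          · rw [swapC_eq_γ hαγ h2 hf hrf]; exact hce.1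
        · push_neg at hcf
          rw [swapC_eq_other hcf.1 hcf.2]; exact hcc
      · rw [swapC_eq_far hrf]; exact hcc

/-- Missing colors at vertices outside the component are unchanged. -/
lemma swap_miss_far {v : V} (hv : ¬ (CG G x y c α γ).Reachable u v) {β : ℕ}
    (h : Miss G Δ x y c v β) : Miss G Δ x y (swapC G x y c α γ u) v β := by
  refine ⟨h.1, h.2.1, fun g hg hvg => ?_⟩
  rw [swapC_eq_at_far hv hg hvg]
  exact h.2.2 g hg hvg

/-- If `α` is missing at `v` in the component, `γ` is missing after the swap. -/
lemma swap_miss_new (hγ1 : 1 ≤ γ) (hγ2 : γ ≤ Δ) {v : V}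
    (hv : (CG G x y c α γ).Reachable u v) (h : Miss G Δ x y c v α) :
    Miss G Δ x y (swapC G x y c α γ u) v γ := by
  refine ⟨hγ1, hγ2, fun g hg hvg => ?_⟩
  by_cases hcg : c g = α
  · exact absurd hcg (h.2.2 g hg hvg)
  · by_cases hcg2 : c g = γ
    · have hαγ : α ≠ γ := fun h' => hcg (hcg2.trans h'.symm)
      rw [swapC_eq_γ hαγ hcg2 hg ⟨v, hvg, hv⟩]
      exact hαγ
    · rw [swapC_eq_other hcg hcg2]; exact hcg2

/-- Missing colors other than `α, γ` are preserved everywhere. -/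
lemma swap_miss_other {v : V} {β : ℕ} (hβα : β ≠ α) (hβγ : β ≠ γ)
    (h : Miss G Δ x y c v β) : Miss G Δ x y (swapC G x y c α γ u) v β := by
  refine ⟨h.1, h.2.1, fun g hg hvg => ?_⟩
  by_cases h1 : c g = α ∧ g ∈ (Gd G x y).edgeSet ∧ ∃ w ∈ g, (CG G x y c α γ).Reachable u w
  · by_cases hαγ : α = γ
    · have : swapC G x y c α γ u g = γ := by rw [swapC, if_pos h1]
      rw [this]; exact hβγ.symm
    · rw [swapC_eq_α h1.1 h1.2.1 h1.2.2]; exact hβγ.symm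
  · by_cases h2 : c g = γ ∧ g ∈ (Gd G x y).edgeSet ∧ ∃ w ∈ g, (CG G x y c α γ).Reachable u w
    · have : swapC G x y c α γ u g = α := by rw [swapC, if_neg h1, if_pos h2]
      rw [this]; exact hβα.symm
    · have : swapC G x y c α γ u g = c g := by rw [swapC, if_neg h1, if_neg h2]
      rw [this]; exact h.2.2 g hg hvg

/-- The chain graph has maximum degree at most 2 (pigeonhole on the two colors). -/
lemma chain_deg2 (hc : Proper G Δ x y c) :
    ∀ v w₁ w₂ w₃, (CG G x y c α γ).Adj v w₁ → (CG G x y c α γ).Adj v w₂ →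
      (CG G x y c α γ).Adj v w₃ → (w₁ = w₂ ∨ w₁ = w₃ ∨ w₂ = w₃) := by
  intro v w₁ w₂ w₃ h1 h2 h3
  have key : ∀ a b : V, (CG G x y c α γ).Adj v a → (CG G x y c α γ).Adj v b →
      c (Sym2.mk v a) = c (Sym2.mk v b) → a = b := by
    intro a b ha hb hcol
    by_contra hne
    have hne' : Sym2.mk v a ≠ Sym2.mk v b := fun h => hne (Sym2.congr_right.1 h)
    exact hc.2 _ ((SimpleGraph.mem_edgeSet _).2 (cg_adj.1 ha).1) _ ((SimpleGraph.mem_edgeSet _).2 (cg_adj.1 hb).1)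
      hne' ⟨v, Sym2.mem_mk_left _ _, Sym2.mem_mk_left _ _⟩ hcol
  rcases (cg_adj.1 h1).2 with e1 | e1 <;> rcases (cg_adj.1 h2).2 with e2 | e2 <;> rcases (cg_adj.1 h3).2 with e3 | e3
  · exact Or.inl (key _ _ h1 h2 (e1.trans e2.symm))
  · exact Or.inl (key _ _ h1 h2 (e1.trans e2.symm))
  · exact Or.inr (Or.inl (key _ _ h1 h3 (e1.trans e3.symm)))
  · exact Or.inr (Or.inr (key _ _ h2 h3 (e2.trans e3.symm)))
  · exact Or.inr (Or.inr (key _ _ h2 h3 (e2.trans e3.symm)))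
  · exact Or.inr (Or.inl (key _ _ h1 h3 (e1.trans e3.symm)))
  · exact Or.inl (key _ _ h1 h2 (e1.trans e2.symm))
  · exact Or.inl (key _ _ h1 h2 (e1.trans e2.symm))

/-- A vertex missing `α` has chain-degree at most 1. -/
lemma chain_deg1 (hc : Proper G Δ x y c) {v : V} (h : Miss G Δ x y c v α) :
    ∀ w₁ w₂, (CG G x y c α γ).Adj v w₁ → (CG G x y c α γ).Adj v w₂ → w₁ = w₂ := by
  intro w₁ w₂ h1 h2
  have e1 : c (Sym2.mk v w₁) = γ := by
    rcases (cg_adj.1 h1).2 with e | e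
    · exact absurd e (h.2.2 _ ((SimpleGraph.mem_edgeSet _).2 (cg_adj.1 h1).1) (Sym2.mem_mk_left _ _))
    · exact e
  have e2 : c (Sym2.mk v w₂) = γ := by
    rcases (cg_adj.1 h2).2 with e | e
    · exact absurd e (h.2.2 _ ((SimpleGraph.mem_edgeSet _).2 (cg_adj.1 h2).1) (Sym2.mem_mk_left _ _))
    · exact e
  by_contra hne
  have hne' : Sym2.mk v w₁ ≠ Sym2.mk v w₂ := fun hh => hne (Sym2.congr_right.1 hh)
  exact hc.2 _ ((SimpleGraph.mem_edgeSet _).2 (cg_adj.1 h1).1) _ ((SimpleGraph.mem_edgeSet _).2 (cg_adj.1 h2).1)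
    hne' ⟨v, Sym2.mem_mk_left _ _, Sym2.mem_mk_left _ _⟩ (e1.trans e2.symm)

end Swap

section PartB
variable {V : Type*} [Fintype V] [DecidableEq V] {G : SimpleGraph V} {Δ : ℕ} {x y : V}
variable {c : Sym2 V → ℕ} {α γ : ℕ}

/-- A vertex missing `γ` has chain-degree at most 1 (variant of `chain_deg1`). -/
lemma chain_deg1' (hc : Proper G Δ x y c) {v : V} (h : Miss G Δ x y c v γ) :
    ∀ w₁ w₂, (CG G x y c α γ).Adj v w₁ → (CG G x y c α γ).Adj v w₂ → w₁ = w₂ := by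
  intro w₁ w₂ h1 h2
  have e1 : c (Sym2.mk v w₁) = α := by
    rcases (cg_adj.1 h1).2 with e | e
    · exact e
    · exact absurd e (h.2.2 _ ((SimpleGraph.mem_edgeSet _).2 (cg_adj.1 h1).1) (Sym2.mem_mk_left _ _))
  have e2 : c (Sym2.mk v w₂) = α := by
    rcases (cg_adj.1 h2).2 with e | e
    · exact e
    · exact absurd e (h.2.2 _ ((SimpleGraph.mem_edgeSet _).2 (cg_adj.1 h2).1) (Sym2.mem_mk_left _ _))
  by_contra hne
  have hne' : Sym2.mk v w₁ ≠ Sym2.mk v w₂ := fun hh => hne (Sym2.congr_right.1 hh)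
  exact hc.2 _ ((SimpleGraph.mem_edgeSet _).2 (cg_adj.1 h1).1) _
    ((SimpleGraph.mem_edgeSet _).2 (cg_adj.1 h2).1)
    hne' ⟨v, Sym2.mem_mk_left _ _, Sym2.mem_mk_left _ _⟩ (e1.trans e2.symm)

/-- Part (b): distinct multifan vertices have disjoint missing color sets. -/
lemma partb [DecidableRel G.Adj] (hadj : G.Adj x y) (hΔ : G.maxDegree = Δ)
    (hclass2 : chromIndex G = Δ + 1) {p : ℕ} {s : ℕ → V}
    (hc : Proper G Δ x y c) (hf : MFan G Δ x y c p s) {i j : ℕ} (hi : i < p) (hj : j < p)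
    (hij : i ≠ j) {α : ℕ} (hmi : Miss G Δ x y c (s i) α) (hmj : Miss G Δ x y c (s j) α) :
    False := by
  classical
  obtain ⟨γ, hγ⟩ := exists_miss_x (c := c) hadj hΔ
  have noγ : ∀ m, m < p → ¬ Miss G Δ x y c (s m) γ := fun m hm hmiss =>
    parta hadj hclass2 m c s hc (hf.restrict (by omega) (by omega)) γ hγ hmiss
  have hαγ : α ≠ γ := fun h => noγ i hi (h ▸ hmi)
  set H : SimpleGraph V := CG G x y c α γ with hH
  have deg2 := chain_deg2 (α := α) (γ := γ) hc
  -- not both s i and s j are in the chain component of x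
  have hnotboth : ¬ (H.Reachable x (s i) ∧ H.Reachable x (s j)) := by
    apply not_reach_two deg2 (Ne.symm (hf.ner i hi)) (Ne.symm (hf.ner j hj))
      (fun h => hij (hf.inj i j hi hj h))
      (chain_deg1' hc hγ) (chain_deg1 hc hmi) (chain_deg1 hc hmj)
  have hexists : ∃ m, m < p ∧ Miss G Δ x y c (s m) α ∧ ¬ H.Reachable x (s m) := by
    by_cases hri : H.Reachable x (s i)
    · by_cases hrj : H.Reachable x (s j)
      · exact absurd ⟨hri, hrj⟩ hnotboth
      · exact ⟨j, hj, hmj, hrj⟩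
    · exact ⟨i, hi, hmi, hri⟩
  set t := Nat.find hexists with htdef
  obtain ⟨htp, hmt, hrt⟩ := Nat.find_spec hexists
  have hmin : ∀ m, m < t → ¬ (m < p ∧ Miss G Δ x y c (s m) α ∧ ¬ H.Reachable x (s m)) :=
    fun m hm => Nat.find_min hexists hm
  set u := s t with hu
  set c₂ := swapC G x y c α γ u with hc₂def
  have hnux : ¬ H.Reachable u x := fun h => hrt h.symm
  have hc₂ : Proper G Δ x y c₂ :=
    swap_proper hc hmt.1 hmt.2.1 hγ.1 hγ.2.1 hαγ
  have hmx₂ : Miss G Δ x y c₂ x γ := swap_miss_far hnux hγ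
  have hmu₂ : Miss G Δ x y c₂ u γ :=
    swap_miss_new hγ.1 hγ.2.1 (SimpleGraph.Reachable.refl u) hmt
  -- the prefix of length t+1 is a multifan for the swapped coloring
  have hfan₂ : MFan G Δ x y c₂ (t + 1) s := by
    refine ⟨by omega, hf.zero, fun a b ha hb => hf.inj a b (by omega) (by omega),
      fun a ha => hf.ner a (by omega), fun a ha => hf.adj a (by omega), ?_⟩
    intro m hm h1m
    obtain ⟨l, hlm, hmiss⟩ := hf.cond m (by omega) h1m
    have hedge : Sym2.mk x (s m) ∈ (Gd G x y).edgeSet :=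
      (SimpleGraph.mem_edgeSet _).2 (hf.gd_adj' (by omega) h1m)
    have heq : c₂ (Sym2.mk x (s m)) = c (Sym2.mk x (s m)) :=
      swapC_eq_at_far hnux hedge (Sym2.mem_mk_left _ _)
    rw [heq]
    set δ := c (Sym2.mk x (s m)) with hδ
    refine ⟨l, hlm, ?_⟩
    by_cases hrl : H.Reachable u (s l)
    · by_cases hδγ : δ = γ
      · exact absurd (hδγ ▸ hmiss) (noγ l (by omega))
      · by_cases hδα : δ = α
        · exfalso
          have hnxl : ¬ H.Reachable x (s l) := fun h => hrt (h.trans hrl.symm)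
          exact hmin l (by omega) ⟨by omega, hδα ▸ hmiss, hnxl⟩
        · exact swap_miss_other hδα hδγ hmiss
    · exact swap_miss_far hrl hmiss
  exact parta hadj hclass2 t c₂ s hc₂ hfan₂ γ hmx₂ hmu₂
end PartB

section Endgame
variable {V : Type*} [Fintype V] [DecidableEq V] {G : SimpleGraph V} {Δ : ℕ} {x y : V}

/-- From criticality, `G - xy` has a proper `Δ`-coloring. -/
lemma exists_coloring (hcrit : IsCriticalEdge G (Sym2.mk x y))
    (hclass2 : chromIndex G = Δ + 1) : ∃ c, Proper G Δ x y c := by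
  classical
  have hne : ∃ k, k ∈ {k | ∃ c, IsEdgeColoring (Gd G x y) k c} := by
    refine ⟨Fintype.card (Sym2 V), fun e => (Fintype.equivFin (Sym2 V) e).val + 1, ?_, ?_⟩
    · intro e he
      dsimp only
      exact ⟨by omega, Nat.succ_le_of_lt (Fintype.equivFin (Sym2 V) e).isLt⟩
    · intro e _ f _ hef _ h
      dsimp only at h
      exact hef ((Fintype.equivFin (Sym2 V)).injective (Fin.ext (by omega)))
  have hmem := Nat.sInf_mem hne
  have hlt : chromIndex (Gd G x y) < Δ + 1 := by
    have := hcrit.2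
    rwa [hclass2] at this
  obtain ⟨c, hc⟩ := hmem
  have hle : chromIndex (Gd G x y) ≤ Δ := by omega
  refine ⟨c, ?_, hc.2⟩
  intro e he
  obtain ⟨h1, h2⟩ := hc.1 e he
  exact ⟨h1, le_trans h2 hle⟩

/-- There is a maximum-length multifan. -/
lemma exists_max_fan (hadj : G.Adj x y) {c : Sym2 V → ℕ} (hc : Proper G Δ x y c) :
    ∃ p s, MFan G Δ x y c p s ∧ ∀ q s', MFan G Δ x y c q s' → q ≤ p := by
  classical
  set S : Set ℕ := {p | ∃ s, MFan G Δ x y c p s} with hS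
  have h1 : 1 ∈ S := by
    refine ⟨fun _ => y, ?_⟩
    exact ⟨le_refl 1, rfl, fun i j hi hj _ => by omega, fun i _ => hadj.ne',
      fun i _ => hadj, fun i hi h1i => by omega⟩
  have hbdd : BddAbove S := by
    refine ⟨Fintype.card V, fun p hp => ?_⟩
    obtain ⟨s, hs⟩ := hp
    have : Function.Injective (fun i : Fin p => s i.val) := by
      intro a b hab
      exact Fin.ext (hs.inj a.val b.val a.isLt b.isLt hab)
    simpa using Fintype.card_le_of_injective _ this
  obtain ⟨s, hs⟩ := Nat.sSup_mem ⟨1, h1⟩ hbdd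
  exact ⟨sSup S, s, hs, fun q s' hq => le_csSup hbdd ⟨s', hq⟩⟩

/-- A maximum multifan is closed: any edge at `x` whose color is missing on the fan
ends in the fan. -/
lemma max_fan_closed (hadj : G.Adj x y) {c : Sym2 V → ℕ} (hc : Proper G Δ x y c)
    {p : ℕ} {s : ℕ → V} (hf : MFan G Δ x y c p s)
    (hmax : ∀ q s', MFan G Δ x y c q s' → q ≤ p)
    {l : ℕ} (hl : l < p) {β : ℕ} (hm : Miss G Δ x y c (s l) β) {z : V}
    (hz : (Gd G x y).Adj x z) (hcz : c (Sym2.mk x z) = β) :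
    ∃ m, m < p ∧ s m = z := by
  classical
  by_contra hno
  push_neg at hno
  set s' : ℕ → V := fun i => if i < p then s i else z with hs'
  have hs'lt : ∀ i, i < p → s' i = s i := fun i hi => if_pos hi
  have hs'p : s' p = z := by simp [hs']
  have hfan : MFan G Δ x y c (p + 1) s' := by
    refine ⟨by omega, ?_, ?_, ?_, ?_, ?_⟩
    · rw [hs'lt 0 hf.pos]; exact hf.zero
    · intro i j hi hj hij
      rcases Nat.lt_or_ge i p with hip | hip <;> rcases Nat.lt_or_ge j p with hjp | hjp
      · exact hf.inj i j hip hjp (by rwa [hs'lt i hip, hs'lt j hjp] at hij)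
      · have hjP : j = p := by omega
        rw [hs'lt i hip, hjP, hs'p] at hij
        exact absurd hij (hno i hip)
      · have hiP : i = p := by omega
        rw [hs'lt j hjp, hiP, hs'p] at hij
        exact absurd hij.symm (hno j hjp)
      · omega
    · intro i hi
      rcases Nat.lt_or_ge i p with hip | hip
      · rw [hs'lt i hip]; exact hf.ner i hip
      · have : i = p := by omega
        rw [this, hs'p]; exact hz.ne'
    · intro i hi
      rcases Nat.lt_or_ge i p with hip | hip
      · rw [hs'lt i hip]; exact hf.adj i hip
      · have : i = p := by omega
        rw [this, hs'p]; exact gd_le hz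
    · intro i hi h1i
      rcases Nat.lt_or_ge i p with hip | hip
      · obtain ⟨m, hm, hmiss⟩ := hf.cond i hip h1i
        refine ⟨m, hm, ?_⟩
        rw [hs'lt i hip, hs'lt m (by omega)]
        exact hmiss
      · have hiP : i = p := by omega
        refine ⟨l, by omega, ?_⟩
        rw [hiP, hs'p, hcz, hs'lt l hl]
        exact hm
  have := hmax (p + 1) s' hfan
  omega

end Endgame

/-- **Vizing's Adjacency Lemma.** Let `G` be a Class 2 graph with maximum
degree `Δ`. If `e = xy` is a critical edge of `G`, then `x` has at least `Δ - d_G(y) + 1`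
neighbors of degree `Δ` in `V(G) \ {y}`. -/
theorem vizing_adjacency_lemma
    {V : Type*} [Fintype V] [DecidableEq V]
    (Δ : ℕ) (G : SimpleGraph V) [DecidableRel G.Adj]
    (hΔ : G.maxDegree = Δ) (hclass2 : chromIndex G = Δ + 1)
    (x y : V) (hadj : G.Adj x y)
    (hcrit : IsCriticalEdge G (Sym2.mk x y)) :
    Δ - G.degree y + 1 ≤
      ((G.neighborFinset x).filter (fun z => z ≠ y ∧ G.degree z = Δ)).card := by
  classical
  obtain ⟨c, hc⟩ := exists_coloring hcrit hclass2
  obtain ⟨p, s, hf, hmax⟩ := exists_max_fan hadj hc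
  set M : ℕ → Finset ℕ := fun i => missF G Δ x y c (s i) with hM
  -- the union of the missing sets injects into the colors `c (x s_m)`, `1 ≤ m < p`
  have hT : (Finset.range p).biUnion M ⊆
      (Finset.Ico 1 p).image (fun m => c (Sym2.mk x (s m))) := by
    intro β hβ
    rw [Finset.mem_biUnion] at hβ
    obtain ⟨i, hi, hβi⟩ := hβ
    rw [Finset.mem_range] at hi
    have hmiss : Miss G Δ x y c (s i) β := mem_missF.1 hβi
    have hnx : ¬ Miss G Δ x y c x β := fun hmx =>
      parta hadj hclass2 i c s hc (hf.restrict (by omega) (by omega)) β hmx hmiss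
    rw [Miss] at hnx
    push_neg at hnx
    obtain ⟨g, hg, hxg, hcg⟩ := hnx hmiss.1 hmiss.2.1
    obtain ⟨z, hz, rfl⟩ := gd_edge_exists hg hxg
    obtain ⟨m, hm, rfl⟩ := max_fan_closed hadj hc hf hmax hi hmiss hz hcg
    have hm1 : 1 ≤ m := by
      rcases Nat.eq_zero_or_pos m with rfl | h
      · exfalso
        rw [hf.zero, gd_adj_x] at hz
        exact hz.2 rfl
      · exact h
    exact Finset.mem_image.2 ⟨m, Finset.mem_Ico.2 ⟨hm1, hm⟩, hcg⟩
  have hdisj : ∀ i ∈ Finset.range p, ∀ j ∈ Finset.range p, i ≠ j → Disjoint (M i) (M j) := by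
    intro i hi j hj hij
    rw [Finset.mem_range] at hi hj
    rw [Finset.disjoint_left]
    intro β hβi hβj
    exact partb hadj hΔ hclass2 hc hf hi hj hij (mem_missF.1 hβi) (mem_missF.1 hβj)
  have hsum : ∑ i ∈ Finset.range p, (M i).card ≤ p - 1 := by
    rw [← Finset.card_biUnion hdisj]
    calc ((Finset.range p).biUnion M).card
        ≤ ((Finset.Ico 1 p).image (fun m => c (Sym2.mk x (s m)))).card :=
          Finset.card_le_card hT
      _ ≤ (Finset.Ico 1 p).card := Finset.card_image_le
      _ = p - 1 := by rw [Nat.card_Ico]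
  -- lower bound for the missing set at `s 0 = y`
  have hdy1 : 1 ≤ G.degree y := by
    rw [← SimpleGraph.card_neighborFinset_eq_degree]
    exact Finset.card_pos.2 ⟨x, (SimpleGraph.mem_neighborFinset _ _ _).2 hadj.symm⟩
  have hM0 : Δ - (G.degree y - 1) ≤ (M 0).card := by
    rw [hM]
    dsimp only
    rw [hf.zero]
    have hcard : ((G.neighborFinset y).erase x).card = G.degree y - 1 := by
      rw [Finset.card_erase_of_mem ((SimpleGraph.mem_neighborFinset _ _ _).2 hadj.symm)]
      simp [SimpleGraph.card_neighborFinset_eq_degree]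
    have := missF_card (Δ := Δ) (c := c) y ((G.neighborFinset y).erase x) cover_y
    rwa [hcard] at this
  have hMi : ∀ i, 1 ≤ i → i < p → Δ - G.degree (s i) ≤ (M i).card := by
    intro i h1 h2
    have := missF_card (Δ := Δ) (c := c) (s i) (G.neighborFinset (s i))
      (cover_other (hf.ner i h2) (hf.sne_y h2 h1))
    rwa [SimpleGraph.card_neighborFinset_eq_degree] at this
  set D : Finset ℕ := (Finset.Ico 1 p).filter (fun m => G.degree (s m) = Δ) with hD
  have hDsub : D ⊆ Finset.Ico 1 p := Finset.filter_subset _ _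
  -- each non-`D` fan vertex misses at least one color
  have hlow : (Finset.Ico 1 p \ D).card ≤ ∑ i ∈ Finset.Ico 1 p, (M i).card := by
    calc (Finset.Ico 1 p \ D).card = ∑ i ∈ Finset.Ico 1 p \ D, 1 := by
          rw [Finset.card_eq_sum_ones]
      _ ≤ ∑ i ∈ Finset.Ico 1 p \ D, (M i).card := by
          apply Finset.sum_le_sum
          intro i hi
          rw [Finset.mem_sdiff, Finset.mem_Ico] at hi
          obtain ⟨⟨h1, h2⟩, hnd⟩ := hi
          have hdeg : G.degree (s i) ≤ Δ := hΔ ▸ G.degree_le_maxDegree (s i)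
          have hne : G.degree (s i) ≠ Δ := by
            intro h
            exact hnd (Finset.mem_filter.2 ⟨Finset.mem_Ico.2 ⟨h1, h2⟩, h⟩)
          have := hMi i h1 h2
          omega
      _ ≤ ∑ i ∈ Finset.Ico 1 p, (M i).card :=
          Finset.sum_le_sum_of_subset (Finset.sdiff_subset)
  have hp1 : 1 ≤ p := hf.pos
  have hsplit : ∑ i ∈ Finset.range p, (M i).card
      = (M 0).card + ∑ i ∈ Finset.Ico 1 p, (M i).card := by
    have hins : Finset.range p = insert 0 (Finset.Ico 1 p) := by
      ext a
      simp only [Finset.mem_range, Finset.mem_insert, Finset.mem_Ico]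
      omega
    rw [hins, Finset.sum_insert (by simp)]
  have hsd : (Finset.Ico 1 p \ D).card = (p - 1) - D.card := by
    rw [Finset.card_sdiff_of_subset hDsub, Nat.card_Ico]
  have hDle : D.card ≤ p - 1 := by
    have := Finset.card_le_card hDsub
    rwa [Nat.card_Ico] at this
  have hdyΔ : G.degree y ≤ Δ := hΔ ▸ G.degree_le_maxDegree y
  -- D injects into the target set
  have hinj : D.card ≤ ((G.neighborFinset x).filter (fun z => z ≠ y ∧ G.degree z = Δ)).card := by
    apply Finset.card_le_card_of_injOn (fun m => s m)
    · intro m hm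
      rw [Finset.mem_coe, hD, Finset.mem_filter, Finset.mem_Ico] at hm
      obtain ⟨⟨h1, h2⟩, h3⟩ := hm
      rw [Finset.mem_coe, Finset.mem_filter]
      exact ⟨(SimpleGraph.mem_neighborFinset _ _ _).2 (hf.adj m h2), hf.sne_y h2 h1, h3⟩
    · intro a ha b hb hab
      rw [Finset.mem_coe, hD, Finset.mem_filter, Finset.mem_Ico] at ha hb
      exact hf.inj a b (by omega) (by omega) hab
  omega
end
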